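/- arXiv:1509.09077 — 5 statements merged into one kernel-verified Lean document; each statement's English description precedes it below -/
import Mathlib

section
/- A normalized sequence {x_n} in a Hilbert space contains a Riesz basic subsequence if and only if it contains a subsequence converging weakly to 0. -/
open Filter Topology

noncomputable section

/-- A sequence `v` in a complex Hilbert space is a *Riesz sequence* if there are constants
`0 < c ≤ C` with `c·Σ|aₙ|² ≤ ‖Σ aₙ vₙ‖² ≤ C·Σ|aₙ|²` for all finitely supported scalars. -/
def RieszSeq {H : Type*} [NormedAddCommGroup H] [InnerProductSpace ℂ H] (v : ℕ → H) : Prop :=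
  ∃ c C : ℝ, 0 < c ∧ c ≤ C ∧ ∀ (a : ℕ → ℂ) (s : Finset ℕ),
    c * ∑ n ∈ s, ‖a n‖ ^ 2 ≤ ‖∑ n ∈ s, a n • v n‖ ^ 2 ∧
      ‖∑ n ∈ s, a n • v n‖ ^ 2 ≤ C * ∑ n ∈ s, ‖a n‖ ^ 2

private lemma aux_term (a b x y t : ℝ) (ha : 0 ≤ a) (hb : 0 ≤ b) (ht : 0 ≤ t)
    (htx : t ≤ x) (hty : t ≤ y) : a * b * t ≤ (a ^ 2 * y + b ^ 2 * x) / 2 := by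
  nlinarith [sq_nonneg (a - b), mul_le_mul_of_nonneg_left hty (sq_nonneg a),
    mul_le_mul_of_nonneg_left htx (sq_nonneg b),
    mul_nonneg (mul_nonneg ha hb) ht]

/-- Almost-orthogonal normalized sequences are Riesz sequences. -/
private lemma aux_riesz {H : Type*} [NormedAddCommGroup H] [InnerProductSpace ℂ H]
    (v : ℕ → H) (hv : ∀ n, ‖v n‖ = 1) (δ : ℕ → ℝ) (hδ0 : ∀ n, 0 ≤ δ n)
    (hsum : ∀ s : Finset ℕ, ∑ m ∈ s, δ m ≤ 1 / 4)
    (hgram : ∀ n m, n ≠ m → ‖(inner ℂ (v n) (v m) : ℂ)‖ ≤ min (δ n) (δ m)) :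
    RieszSeq v := by
  refine ⟨1/2, 3/2, by norm_num, by norm_num, fun a s => ?_⟩
  set T := ∑ n ∈ s, ‖a n‖ ^ 2 with hT
  have hT0 : 0 ≤ T := Finset.sum_nonneg fun n _ => sq_nonneg _
  set E := ∑ n ∈ s, ∑ m ∈ s.erase n, RCLike.re (inner ℂ (a n • v n) (a m • v m) : ℂ) with hE
  have expand : ‖∑ n ∈ s, a n • v n‖ ^ 2 = T + E := by
    have h1 : ‖∑ n ∈ s, a n • v n‖ ^ 2
        = RCLike.re (inner ℂ (∑ n ∈ s, a n • v n) (∑ n ∈ s, a n • v n) : ℂ) :=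
      (inner_self_eq_norm_sq _).symm
    rw [h1, sum_inner, map_sum]
    have h2 : ∀ n ∈ s, RCLike.re (inner ℂ (a n • v n) (∑ m ∈ s, a m • v m) : ℂ)
        = ‖a n‖ ^ 2 + ∑ m ∈ s.erase n, RCLike.re (inner ℂ (a n • v n) (a m • v m) : ℂ) := by
      intro n hn
      rw [inner_sum, map_sum, ← Finset.add_sum_erase _ _ hn]
      congr 1
      rw [inner_self_eq_norm_sq, norm_smul, hv n, mul_one]
    rw [Finset.sum_congr rfl h2, Finset.sum_add_distrib]
  have key : |E| ≤ T / 4 := by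
    have hterm : ∀ n ∈ s, ∀ m ∈ s.erase n,
        |RCLike.re (inner ℂ (a n • v n) (a m • v m) : ℂ)|
          ≤ (‖a n‖ ^ 2 * δ m + ‖a m‖ ^ 2 * δ n) / 2 := by
      intro n hn m hm
      have hnm : n ≠ m := (Finset.ne_of_mem_erase hm).symm
      have h1 : ‖(inner ℂ (a n • v n) (a m • v m) : ℂ)‖
          = ‖a n‖ * ‖a m‖ * ‖(inner ℂ (v n) (v m) : ℂ)‖ := by
        rw [inner_smul_left, inner_smul_right, norm_mul, norm_mul, RCLike.norm_conj]
        ring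
      have h2 := hgram n m hnm
      calc |RCLike.re (inner ℂ (a n • v n) (a m • v m) : ℂ)|
          ≤ ‖(inner ℂ (a n • v n) (a m • v m) : ℂ)‖ := RCLike.abs_re_le_norm _
        _ = ‖a n‖ * ‖a m‖ * ‖(inner ℂ (v n) (v m) : ℂ)‖ := h1
        _ ≤ (‖a n‖ ^ 2 * δ m + ‖a m‖ ^ 2 * δ n) / 2 :=
            aux_term (‖a n‖) (‖a m‖) (δ n) (δ m) (‖(inner ℂ (v n) (v m) : ℂ)‖)
              (norm_nonneg _) (norm_nonneg _) (norm_nonneg _)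
              (le_trans h2 (min_le_left _ _)) (le_trans h2 (min_le_right _ _))
    have hrow : ∀ n ∈ s, ∑ m ∈ s.erase n,
        |RCLike.re (inner ℂ (a n • v n) (a m • v m) : ℂ)|
          ≤ (‖a n‖ ^ 2 * (1/4) + δ n * T) / 2 := by
      intro n hn
      calc ∑ m ∈ s.erase n, |RCLike.re (inner ℂ (a n • v n) (a m • v m) : ℂ)|
          ≤ ∑ m ∈ s.erase n, (‖a n‖ ^ 2 * δ m + ‖a m‖ ^ 2 * δ n) / 2 :=
            Finset.sum_le_sum (hterm n hn)
        _ = (‖a n‖ ^ 2 * (∑ m ∈ s.erase n, δ m)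
              + (∑ m ∈ s.erase n, ‖a m‖ ^ 2) * δ n) / 2 := by
            rw [← Finset.sum_div, Finset.sum_add_distrib, ← Finset.mul_sum, ← Finset.sum_mul]
        _ ≤ (‖a n‖ ^ 2 * (1/4) + δ n * T) / 2 := by
            have e1 : ∑ m ∈ s.erase n, δ m ≤ 1/4 := hsum _
            have e2 : ∑ m ∈ s.erase n, ‖a m‖ ^ 2 ≤ T :=
              Finset.sum_le_sum_of_subset_of_nonneg (Finset.erase_subset _ _)
                (fun m _ _ => sq_nonneg _)
            have e3 : 0 ≤ δ n := hδ0 n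
            have e4 : (0:ℝ) ≤ ‖a n‖ ^ 2 := sq_nonneg _
            have e5 : 0 ≤ ∑ m ∈ s.erase n, δ m :=
              Finset.sum_nonneg fun m _ => hδ0 m
            nlinarith
    calc |E| ≤ ∑ n ∈ s, |∑ m ∈ s.erase n, RCLike.re (inner ℂ (a n • v n) (a m • v m) : ℂ)| :=
          Finset.abs_sum_le_sum_abs _ _
      _ ≤ ∑ n ∈ s, (‖a n‖ ^ 2 * (1/4) + δ n * T) / 2 :=
          Finset.sum_le_sum fun n hn =>
            le_trans (Finset.abs_sum_le_sum_abs _ _) (hrow n hn)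
      _ = (T * (1/4) + (∑ n ∈ s, δ n) * T) / 2 := by
          rw [← Finset.sum_div, Finset.sum_add_distrib, ← Finset.sum_mul, ← Finset.sum_mul]
      _ ≤ T / 4 := by
          have e1 : ∑ n ∈ s, δ n ≤ 1/4 := hsum _
          have e2 : 0 ≤ ∑ n ∈ s, δ n := Finset.sum_nonneg fun n _ => hδ0 n
          nlinarith
  rw [expand]
  rw [abs_le] at key
  constructor
  · linarith [key.1]
  · linarith [key.2]

/-- A normalized sequence in a separable Hilbert space contains a Riesz basic subsequence
if and only if it contains a subsequence converging weakly to `0`. -/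
theorem stmt0 {H : Type*} [NormedAddCommGroup H] [InnerProductSpace ℂ H] [CompleteSpace H]
    [TopologicalSpace.SeparableSpace H] (x : ℕ → H) (hx : ∀ n, ‖x n‖ = 1) :
    (∃ φ : ℕ → ℕ, StrictMono φ ∧ RieszSeq (x ∘ φ)) ↔
      (∃ φ : ℕ → ℕ, StrictMono φ ∧
        ∀ y : H, Tendsto (fun j => (inner ℂ (x (φ j)) y : ℂ)) atTop (nhds 0)) := by
  constructor
  · rintro ⟨φ, hφ, c, C, hc, hcC, hb⟩
    refine ⟨φ, hφ, fun z => ?_⟩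
    set b : ℕ → ℂ := fun j => (inner ℂ (x (φ j)) z : ℂ) with hbdef
    have hC0 : 0 ≤ C := le_trans hc.le hcC
    have hbound : ∀ N, ∑ j ∈ Finset.range N, ‖b j‖ ^ 2 ≤ C * ‖z‖ ^ 2 := by
      intro N
      set T := ∑ j ∈ Finset.range N, ‖b j‖ ^ 2 with hT
      have hT0 : 0 ≤ T := Finset.sum_nonneg fun _ _ => sq_nonneg _
      set w := ∑ j ∈ Finset.range N, b j • (x ∘ φ) j with hw
      have hw2 : ‖w‖ ^ 2 ≤ C * T := (hb b (Finset.range N)).2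
      have hwz : (inner ℂ w z : ℂ) = (T : ℂ) := by
        rw [hw, sum_inner, hT]
        push_cast
        refine Finset.sum_congr rfl fun j _ => ?_
        show (inner ℂ (b j • x (φ j)) z : ℂ) = _
        rw [inner_smul_left]
        show (starRingEnd ℂ) (b j) * (inner ℂ (x (φ j)) z : ℂ) = _
        rw [show (inner ℂ (x (φ j)) z : ℂ) = b j from rfl, RCLike.conj_mul]
        norm_cast
      have hTle : T ≤ ‖w‖ * ‖z‖ := by
        calc T = RCLike.re (inner ℂ w z : ℂ) := by rw [hwz]; simp
          _ ≤ ‖(inner ℂ w z : ℂ)‖ := RCLike.re_le_norm _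
          _ ≤ ‖w‖ * ‖z‖ := norm_inner_le_norm _ _
      rcases eq_or_lt_of_le hT0 with h | h
      · rw [← h]; positivity
      · have h1 : T * T ≤ (‖w‖ * ‖z‖) * (‖w‖ * ‖z‖) :=
          mul_le_mul hTle hTle hT0 (by positivity)
        nlinarith [norm_nonneg w, norm_nonneg z]
    have hsummable : Summable (fun j => ‖b j‖ ^ 2) :=
      summable_of_sum_range_le (fun _ => sq_nonneg _) hbound
    have h0 := hsummable.tendsto_atTop_zero
    have h1 : Tendsto (fun j => ‖b j‖) atTop (nhds 0) := by
      have h2 := h0.sqrt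
      simp only [Real.sqrt_sq (norm_nonneg _), Real.sqrt_zero] at h2
      exact h2
    exact tendsto_zero_iff_norm_tendsto_zero.mpr h1
  · rintro ⟨φ, hφ, hweak⟩
    have hδ0 : ∀ n, (0:ℝ) ≤ (1/8) * (1/4 : ℝ) ^ n := fun n => by positivity
    set δ : ℕ → ℝ := fun m => (1/8) * (1/4 : ℝ) ^ m with hδdef
    have hδpos : ∀ n, 0 < δ n := fun n => by positivity
    have hδanti : ∀ p q : ℕ, p ≤ q → δ q ≤ δ p := by
      intro p q hpq
      have : (1/4 : ℝ) ^ q ≤ (1/4 : ℝ) ^ p :=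
        pow_le_pow_of_le_one (by norm_num) (by norm_num) hpq
      simp only [hδdef]
      linarith
    have hsumδ : ∀ s : Finset ℕ, ∑ m ∈ s, δ m ≤ 1/4 := by
      intro s
      have hsummable : Summable δ :=
        Summable.mul_left _ (summable_geometric_of_lt_one (by norm_num) (by norm_num))
      have h1 : ∑ m ∈ s, δ m ≤ ∑' m, δ m :=
        Summable.sum_le_tsum s (fun i _ => (hδpos i).le) hsummable
      have h2 : ∑' m, δ m = (1/8) * (1 - 1/4 : ℝ)⁻¹ := by
        simp only [hδdef]
        rw [tsum_mul_left, tsum_geometric_of_lt_one (by norm_num) (by norm_num)]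
      rw [h2] at h1
      norm_num at h1
      linarith
    have key : ∀ (ε : ℝ), 0 < ε → ∀ N : ℕ, ∃ m, N < m ∧
        ∀ i ≤ N, ‖(inner ℂ (x (φ m)) (x (φ i)) : ℂ)‖ < ε := by
      intro ε hε N
      have h1 : ∀ᶠ m in atTop, ∀ i ∈ Finset.range (N + 1),
          ‖(inner ℂ (x (φ m)) (x (φ i)) : ℂ)‖ < ε := by
        rw [eventually_all_finset]
        intro i _
        have h := Metric.tendsto_nhds.mp (hweak (x (φ i))) ε hε
        simpa [dist_zero_right] using h
      obtain ⟨m, hm1, hm2⟩ := (h1.and (eventually_gt_atTop N)).exists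
      exact ⟨m, hm2, fun i hi => hm1 i (Finset.mem_range.mpr (Nat.lt_succ_of_le hi))⟩
    choose f hf1 hf2 using fun (k : ℕ) => key (δ (k+1)) (hδpos _)
    set ψ : ℕ → ℕ := fun k => Nat.rec 0 (fun k ih => f k ih) k with hψdef
    have hψsucc : ∀ k, ψ (k+1) = f k (ψ k) := fun k => rfl
    have hψmono : StrictMono ψ := strictMono_nat_of_lt_succ fun k => hf1 k (ψ k)
    have horth : ∀ i j, i < j → ‖(inner ℂ (x (φ (ψ j))) (x (φ (ψ i))) : ℂ)‖ ≤ δ j := by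
      intro i j hij
      cases j with
      | zero => omega
      | succ k =>
        have hik : i ≤ k := Nat.lt_succ_iff.mp hij
        have h1 : ψ i ≤ ψ k := hψmono.monotone hik
        have := hf2 k (ψ k) (ψ i) h1
        rw [hψsucc]
        exact this.le
    have hgram : ∀ n m, n ≠ m →
        ‖(inner ℂ (x ((φ ∘ ψ) n)) (x ((φ ∘ ψ) m)) : ℂ)‖ ≤ min (δ n) (δ m) := by
      intro n m hnm
      rcases lt_or_gt_of_ne hnm with h | h
      · have h1 : ‖(inner ℂ (x (φ (ψ n))) (x (φ (ψ m))) : ℂ)‖ ≤ δ m := by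
          rw [norm_inner_symm]
          exact horth n m h
        exact le_min (le_trans h1 (hδanti n m h.le)) h1
      · have h1 := horth m n h
        exact le_min h1 (le_trans h1 (hδanti m n h.le))
    refine ⟨φ ∘ ψ, hφ.comp hψmono, ?_⟩
    exact aux_riesz (x ∘ (φ ∘ ψ)) (fun n => hx _) δ (fun n => (hδpos n).le) hsumδ hgram
end
end

section
/- If {x_n} is a sequence of unit vectors in a Hilbert space whose Gram matrix G = (⟨x_k, x_l⟩) satisfies Σ_{l} Σ_{k ≠ l} |⟨x_k, x_l⟩|² < 1, then {x_n} is a Riesz sequence. -/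
open Filter Topology

noncomputable section

/-- If `{xₙ}` are unit vectors whose Gram matrix `G = (⟨x_k, x_l⟩)` satisfies
`Σ_l Σ_{k ≠ l} |⟨x_k, x_l⟩|² < 1`, then `{xₙ}` is a Riesz sequence. -/
theorem stmt1 {H : Type*} [NormedAddCommGroup H] [InnerProductSpace ℂ H] [CompleteSpace H]
    (x : ℕ → H) (hx : ∀ n, ‖x n‖ = 1)
    (hsum : Summable (fun p : ℕ × ℕ =>
      if p.1 = p.2 then (0 : ℝ) else ‖(inner ℂ (x p.1) (x p.2) : ℂ)‖ ^ 2))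
    (hlt : (∑' p : ℕ × ℕ,
      if p.1 = p.2 then (0 : ℝ) else ‖(inner ℂ (x p.1) (x p.2) : ℂ)‖ ^ 2) < 1) :
    RieszSeq x := by
  unfold RieszSeq
  classical
  set S : ℝ := ∑' p : ℕ × ℕ,
      if p.1 = p.2 then (0 : ℝ) else ‖(inner ℂ (x p.1) (x p.2) : ℂ)‖ ^ 2 with hSdef
  have hS0 : 0 ≤ S := tsum_nonneg fun p => by split <;> positivity
  set r := Real.sqrt S with hrdef
  have hr0 : 0 ≤ r := Real.sqrt_nonneg _
  have hr1 : r < 1 := by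
    have h := Real.sqrt_lt_sqrt hS0 hlt
    rwa [Real.sqrt_one] at h
  refine ⟨1 - r, 1 + r, by linarith, by linarith, fun a s => ?_⟩
  set N := ∑ n ∈ s, ‖a n‖ ^ 2 with hNdef
  have hN0 : 0 ≤ N := Finset.sum_nonneg fun n _ => by positivity
  set t := (s ×ˢ s).filter (fun p => ¬ p.1 = p.2) with htdef
  have hts : t ⊆ s ×ˢ s := Finset.filter_subset _ _
  -- partial Gram sum is ≤ S
  have hG : ∑ p ∈ t, ‖(inner ℂ (x p.1) (x p.2) : ℂ)‖ ^ 2 ≤ S := by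
    have heq : ∑ p ∈ t, ‖(inner ℂ (x p.1) (x p.2) : ℂ)‖ ^ 2
        = ∑ p ∈ s ×ˢ s, (if p.1 = p.2 then (0:ℝ)
            else ‖(inner ℂ (x p.1) (x p.2) : ℂ)‖ ^ 2) := by
      rw [htdef, Finset.sum_filter]
      refine Finset.sum_congr rfl fun p _ => ?_
      by_cases h : p.1 = p.2 <;> simp [h]
    rw [heq]
    exact Summable.sum_le_tsum _ (fun p _ => by split <;> positivity) hsum
  -- expansion of the norm square
  have expand : (‖∑ n ∈ s, a n • x n‖ ^ 2 : ℝ)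
      = N + ∑ p ∈ t, ((starRingEnd ℂ) (a p.1) * a p.2 * inner ℂ (x p.1) (x p.2)).re := by
    have h1 : (inner ℂ (∑ n ∈ s, a n • x n) (∑ n ∈ s, a n • x n) : ℂ)
        = ∑ p ∈ s ×ˢ s, (starRingEnd ℂ) (a p.1) * a p.2 * inner ℂ (x p.1) (x p.2) := by
      rw [Finset.sum_product, sum_inner]
      refine Finset.sum_congr rfl fun k _ => ?_
      rw [inner_smul_left, inner_sum, Finset.mul_sum]
      refine Finset.sum_congr rfl fun l _ => ?_
      rw [inner_smul_right]; ring
    have h2 : (‖∑ n ∈ s, a n • x n‖ ^ 2 : ℝ)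
        = (∑ p ∈ s ×ˢ s, (starRingEnd ℂ) (a p.1) * a p.2 * inner ℂ (x p.1) (x p.2)).re := by
      rw [@norm_sq_eq_re_inner ℂ, h1]; rfl
    rw [h2, Complex.re_sum,
      ← Finset.sum_filter_add_sum_filter_not (s ×ˢ s) (fun p => p.1 = p.2)]
    congr 1
    · rw [Finset.sum_filter, Finset.sum_product, hNdef]
      refine Finset.sum_congr rfl fun k hk => ?_
      rw [Finset.sum_ite_eq s k (fun l => ((starRingEnd ℂ) (a k) * a l * inner ℂ (x k) (x l)).re)]
      rw [if_pos hk, inner_self_eq_norm_sq_to_K, hx k]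
      rw [mul_comm ((starRingEnd ℂ) (a k)) (a k), Complex.mul_conj]
      simp [Complex.normSq_eq_norm_sq]
      rw [← Complex.ofReal_pow, Complex.ofReal_re]
  -- bound the off-diagonal term
  set T := ∑ p ∈ t, ((starRingEnd ℂ) (a p.1) * a p.2 * inner ℂ (x p.1) (x p.2)).re with hTdef
  have hT : |T| ≤ r * N := by
    have hT1 : |T| ≤ ∑ p ∈ t, (‖a p.1‖ * ‖a p.2‖) * ‖(inner ℂ (x p.1) (x p.2) : ℂ)‖ := by
      refine (Finset.abs_sum_le_sum_abs _ _).trans (Finset.sum_le_sum fun p _ => ?_)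
      calc |((starRingEnd ℂ) (a p.1) * a p.2 * inner ℂ (x p.1) (x p.2)).re|
          ≤ ‖(starRingEnd ℂ) (a p.1) * a p.2 * inner ℂ (x p.1) (x p.2)‖ :=
            Complex.abs_re_le_norm _
        _ = (‖a p.1‖ * ‖a p.2‖) * ‖(inner ℂ (x p.1) (x p.2) : ℂ)‖ := by
            rw [norm_mul, norm_mul, Complex.norm_conj]
    set B := ∑ p ∈ t, (‖a p.1‖ * ‖a p.2‖) * ‖(inner ℂ (x p.1) (x p.2) : ℂ)‖ with hBdef
    have hB0 : 0 ≤ B := Finset.sum_nonneg fun p _ => by positivity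
    have hCS : B ^ 2 ≤ (∑ p ∈ t, (‖a p.1‖ * ‖a p.2‖) ^ 2)
        * (∑ p ∈ t, ‖(inner ℂ (x p.1) (x p.2) : ℂ)‖ ^ 2) :=
      Finset.sum_mul_sq_le_sq_mul_sq t _ _
    have hA : ∑ p ∈ t, (‖a p.1‖ * ‖a p.2‖) ^ 2 ≤ N ^ 2 := by
      calc ∑ p ∈ t, (‖a p.1‖ * ‖a p.2‖) ^ 2
          ≤ ∑ p ∈ s ×ˢ s, (‖a p.1‖ * ‖a p.2‖) ^ 2 :=
            Finset.sum_le_sum_of_subset_of_nonneg hts (fun p _ _ => by positivity)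
        _ = N ^ 2 := by
            rw [Finset.sum_product, hNdef, sq, Finset.sum_mul_sum]
            refine Finset.sum_congr rfl fun k _ => Finset.sum_congr rfl fun l _ => ?_
            ring
    have hA0 : 0 ≤ ∑ p ∈ t, (‖a p.1‖ * ‖a p.2‖) ^ 2 :=
      Finset.sum_nonneg fun p _ => by positivity
    have hB2 : B ^ 2 ≤ (r * N) ^ 2 := by
      have : B ^ 2 ≤ N ^ 2 * S := hCS.trans (mul_le_mul hA hG
        (Finset.sum_nonneg fun p _ => by positivity) (by positivity))
      calc B ^ 2 ≤ N ^ 2 * S := this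
        _ = (r * N) ^ 2 := by rw [mul_pow, hrdef, Real.sq_sqrt hS0]; ring
    have hrN : 0 ≤ r * N := by positivity
    have hBle : B ≤ r * N := by nlinarith [hB2, hB0, hrN]
    exact hT1.trans hBle
  rw [abs_le] at hT
  rw [expand]
  constructor <;> nlinarith [hT.1, hT.2, hN0]
end
end

section
/- If a normalized sequence {x_n} in a Hilbert space is uniformly minimal and contains no Riesz subsequence, then {x_n} contains a subsequence {x_{n_k}} converging weakly to some x such that {x_{n_k} - x} is a Riesz sequence and x is not in the closed linear span of {x_{n_k} - x}. -/
open Filter Topology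

lemma sum_halves (s : Finset ℕ) : ∑ n ∈ s, ((1:ℝ)/2)^n ≤ 2 := by
  classical
  obtain ⟨N, hN⟩ : ∃ N, s ⊆ Finset.range N :=
    ⟨(s.sup id)+1, fun n hn => Finset.mem_range.2 (Nat.lt_succ_of_le (Finset.le_sup (f := id) hn))⟩
  calc ∑ n ∈ s, ((1:ℝ)/2)^n ≤ ∑ n ∈ Finset.range N, ((1:ℝ)/2)^n :=
        Finset.sum_le_sum_of_subset_of_nonneg hN (by intros; positivity)
  _ ≤ 2 := sum_geometric_two_le N

lemma sum_half_succ (s : Finset ℕ) : ∑ n ∈ s, ((1:ℝ)/2)^(n+1) ≤ 1 := by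
  have h : ∑ n ∈ s, ((1:ℝ)/2)^(n+1) = (∑ n ∈ s, ((1:ℝ)/2)^n) * (1/2) := by
    rw [Finset.sum_mul]
    exact Finset.sum_congr rfl fun n _ => (pow_succ _ _)
  rw [h]
  nlinarith [sum_halves s]

lemma weak_subseq {H : Type*} [NormedAddCommGroup H] [InnerProductSpace ℂ H] [CompleteSpace H]
    [TopologicalSpace.SeparableSpace H] (x : ℕ → H) (hx : ∀ n, ‖x n‖ ≤ 1) :
    ∃ (ψ : ℕ → ℕ) (x₀ : H), StrictMono ψ ∧
      ∀ y : H, Tendsto (fun j => (inner ℂ (x (ψ j)) y : ℂ)) atTop (𝓝 (inner ℂ x₀ y)) := by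
  have hne : Nonempty H := ⟨0⟩
  set d : ℕ → H := TopologicalSpace.denseSeq H with hd_def
  have hd : DenseRange d := TopologicalSpace.denseRange_denseSeq H
  set F : ℕ → (ℕ → ℂ) := fun n i => inner ℂ (x n) (d i) with hF
  have hFmem : ∀ n, F n ∈ Set.univ.pi fun i => Metric.closedBall (0:ℂ) ‖d i‖ := by
    intro n i _
    simp only [Metric.mem_closedBall, dist_zero_right]
    calc ‖(inner ℂ (x n) (d i) : ℂ)‖ ≤ ‖x n‖ * ‖d i‖ := norm_inner_le_norm _ _
    _ ≤ 1 * ‖d i‖ := mul_le_mul_of_nonneg_right (hx n) (norm_nonneg _)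
    _ = ‖d i‖ := one_mul _
  obtain ⟨L, -, ψ, hψ, hL⟩ :=
    (isCompact_univ_pi fun i => isCompact_closedBall (0:ℂ) ‖d i‖).tendsto_subseq hFmem
  rw [tendsto_pi_nhds] at hL
  have hcauchy : ∀ y : H, CauchySeq fun j => (inner ℂ (x (ψ j)) y : ℂ) := by
    intro y
    rw [Metric.cauchySeq_iff']
    intro ε hε
    obtain ⟨i, hi⟩ := Metric.denseRange_iff.1 hd y (ε/4) (by positivity)
    have hC : CauchySeq fun j => (F ∘ ψ) j i := (hL i).cauchySeq
    rw [Metric.cauchySeq_iff'] at hC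
    obtain ⟨N, hN⟩ := hC (ε/2) (by positivity)
    refine ⟨N, fun n hn => ?_⟩
    have h1 := hN n hn
    have key : dist (inner ℂ (x (ψ n)) y : ℂ) (inner ℂ (x (ψ N)) y) ≤
        dist (inner ℂ (x (ψ n)) (d i) : ℂ) (inner ℂ (x (ψ N)) (d i)) + 2 * dist y (d i) := by
      rw [dist_eq_norm, dist_eq_norm, dist_eq_norm]
      have e : (inner ℂ (x (ψ n)) y - inner ℂ (x (ψ N)) y : ℂ) =
          (inner ℂ (x (ψ n)) (d i) - inner ℂ (x (ψ N)) (d i))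
          + (inner ℂ (x (ψ n)) (y - d i) - inner ℂ (x (ψ N)) (y - d i)) := by
        simp only [inner_sub_right]; ring
      rw [e]
      refine (norm_add_le _ _).trans ?_
      have h2 : ‖(inner ℂ (x (ψ n)) (y - d i) - inner ℂ (x (ψ N)) (y - d i) : ℂ)‖ ≤ 2 * ‖y - d i‖ := by
        refine (norm_sub_le _ _).trans ?_
        have ha := (norm_inner_le_norm (𝕜 := ℂ) (x (ψ n)) (y - d i)).trans
          (mul_le_of_le_one_left (norm_nonneg _) (hx _))
        have hb := (norm_inner_le_norm (𝕜 := ℂ) (x (ψ N)) (y - d i)).trans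
          (mul_le_of_le_one_left (norm_nonneg _) (hx _))
        linarith
      linarith [h2]
    calc dist (inner ℂ (x (ψ n)) y : ℂ) (inner ℂ (x (ψ N)) y)
        ≤ dist ((F ∘ ψ) n i) ((F ∘ ψ) N i) + 2 * dist y (d i) := key
    _ < ε/2 + 2*(ε/4) := by
        have := hi
        gcongr
    _ = ε := by ring
  have hlim : ∀ y : H, ∃ l : ℂ, Tendsto (fun j => (inner ℂ (x (ψ j)) y : ℂ)) atTop (𝓝 l) :=
    fun y => cauchySeq_tendsto_of_complete (hcauchy y)
  choose g hg using hlim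
  have gadd : ∀ y z, g (y + z) = g y + g z := fun y z =>
    tendsto_nhds_unique (hg (y+z)) (by simpa only [inner_add_right] using (hg y).add (hg z))
  have gsmul : ∀ (c : ℂ) (y : H), g (c • y) = c • g y := fun c y =>
    tendsto_nhds_unique (hg (c • y))
      (by simpa only [inner_smul_right, smul_eq_mul] using (hg y).const_mul c)
  have gbound : ∀ y, ‖g y‖ ≤ 1 * ‖y‖ := by
    intro y
    rw [one_mul]
    refine le_of_tendsto (hg y).norm (Filter.Eventually.of_forall fun j => ?_)
    exact (norm_inner_le_norm _ _).trans (mul_le_of_le_one_left (norm_nonneg _) (hx _))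
  set G : StrongDual ℂ H :=
    LinearMap.mkContinuous
      { toFun := g, map_add' := gadd, map_smul' := gsmul } 1 gbound with hG
  refine ⟨ψ, (InnerProductSpace.toDual ℂ H).symm G, hψ, fun y => ?_⟩
  rw [InnerProductSpace.toDual_symm_apply]
  exact hg y

lemma riesz_bounds {H : Type*} [NormedAddCommGroup H] [InnerProductSpace ℂ H]
    (v : ℕ → H) (ε : ℝ) (hε : 0 < ε)
    (hlow : ∀ j, ε ≤ ‖v j‖) (hup : ∀ j, ‖v j‖ ≤ 2)
    (hsmall : ∀ i j, i ≠ j → ‖(inner ℂ (v i) (v j) : ℂ)‖ ≤ ε^2/4 * ((1:ℝ)/2)^(i+j))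
    (a : ℕ → ℂ) (s : Finset ℕ) :
    ε^2/2 * ∑ n ∈ s, ‖a n‖ ^ 2 ≤ ‖∑ n ∈ s, a n • v n‖ ^ 2 ∧
      ‖∑ n ∈ s, a n • v n‖ ^ 2 ≤ (4 + ε^2/2) * ∑ n ∈ s, ‖a n‖ ^ 2 := by
  classical
  set Q := ∑ n ∈ s, ‖a n‖ ^ 2 with hQ
  have hQ0 : 0 ≤ Q := Finset.sum_nonneg fun n _ => by positivity
  set S := ∑ n ∈ s, a n • v n with hS
  set T := ∑ n ∈ s, ‖a n‖ * ((1:ℝ)/2)^n with hT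
  have hT0 : 0 ≤ T := Finset.sum_nonneg fun n _ => by positivity
  have hT2 : T^2 ≤ 2*Q := by
    have h1 := Finset.sum_mul_sq_le_sq_mul_sq s (fun n => ‖a n‖) (fun n => ((1:ℝ)/2)^n)
    have h2 : ∑ n ∈ s, (((1:ℝ)/2)^n)^2 ≤ 2 := by
      have hb : ∀ n ∈ s, (((1:ℝ)/2)^n)^2 ≤ ((1:ℝ)/2)^n := fun n _ => by
        rw [← pow_mul]
        exact pow_le_pow_of_le_one (by norm_num) (by norm_num) (by omega)
      exact (Finset.sum_le_sum hb).trans (sum_halves s)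
    calc T^2 ≤ (∑ n ∈ s, ‖a n‖^2) * ∑ n ∈ s, (((1:ℝ)/2)^n)^2 := h1
    _ ≤ Q * 2 := mul_le_mul_of_nonneg_left h2 hQ0
    _ = 2*Q := mul_comm _ _
  have hinner : (inner ℂ S S : ℂ) =
      ∑ n ∈ s, ∑ m ∈ s, (starRingEnd ℂ) (a n) * (a m * inner ℂ (v n) (v m)) := by
    rw [hS, sum_inner]
    refine Finset.sum_congr rfl fun n _ => ?_
    rw [inner_smul_left, inner_sum, Finset.mul_sum]
    exact Finset.sum_congr rfl fun m _ => by rw [inner_smul_right]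
  have hre : ‖S‖^2 = ∑ n ∈ s, ∑ m ∈ s,
      ((starRingEnd ℂ) (a n) * (a m * inner ℂ (v n) (v m))).re := by
    have h0 : ((inner ℂ S S : ℂ)).re = ‖S‖^2 := inner_self_eq_norm_sq (𝕜 := ℂ) S
    rw [← h0, hinner]
    simp [Complex.re_sum]
  set E := ∑ n ∈ s, ∑ m ∈ s.erase n,
      ((starRingEnd ℂ) (a n) * (a m * inner ℂ (v n) (v m))).re with hE
  have hsplit : ‖S‖^2 = (∑ n ∈ s, ‖a n‖^2 * ‖v n‖^2) + E := by
    rw [hre, hE, ← Finset.sum_add_distrib]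
    refine Finset.sum_congr rfl fun n hn => ?_
    rw [← Finset.add_sum_erase _ _ hn]
    congr 1
    have h1 : (starRingEnd ℂ) (a n) * (a n * (inner ℂ (v n) (v n) : ℂ))
        = ((‖a n‖^2 * ‖v n‖^2 : ℝ) : ℂ) := by
      rw [← mul_assoc, RCLike.conj_mul, inner_self_eq_norm_sq_to_K]
      norm_cast
    rw [h1, Complex.ofReal_re]
  have hEbound : |E| ≤ ε^2/2 * Q := by
    have step1 : |E| ≤ ∑ n ∈ s, ∑ m ∈ s.erase n,
        (ε^2/4) * ((‖a n‖ * ((1:ℝ)/2)^n) * (‖a m‖ * ((1:ℝ)/2)^m)) := by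
      refine (Finset.abs_sum_le_sum_abs _ _).trans (Finset.sum_le_sum fun n hn => ?_)
      refine (Finset.abs_sum_le_sum_abs _ _).trans (Finset.sum_le_sum fun m hm => ?_)
      have hnm : n ≠ m := fun h => (Finset.mem_erase.1 hm).1 h.symm
      calc |((starRingEnd ℂ) (a n) * (a m * inner ℂ (v n) (v m))).re|
          ≤ ‖(starRingEnd ℂ) (a n) * (a m * inner ℂ (v n) (v m))‖ :=
            Complex.abs_re_le_norm _
      _ = ‖a n‖ * (‖a m‖ * ‖(inner ℂ (v n) (v m) : ℂ)‖) := by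
            rw [norm_mul, norm_mul, RCLike.norm_conj]
      _ ≤ ‖a n‖ * (‖a m‖ * (ε^2/4 * ((1:ℝ)/2)^(n+m))) := by
            gcongr
            exact hsmall n m hnm
      _ = (ε^2/4) * ((‖a n‖ * ((1:ℝ)/2)^n) * (‖a m‖ * ((1:ℝ)/2)^m)) := by
            rw [pow_add]; ring
    have step2 : ∑ n ∈ s, ∑ m ∈ s.erase n,
        (ε^2/4) * ((‖a n‖ * ((1:ℝ)/2)^n) * (‖a m‖ * ((1:ℝ)/2)^m)) ≤ (ε^2/4) * (T * T) := by
      have inner_le : ∀ n ∈ s, ∑ m ∈ s.erase n,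
          (ε^2/4) * ((‖a n‖ * ((1:ℝ)/2)^n) * (‖a m‖ * ((1:ℝ)/2)^m))
          ≤ (ε^2/4) * ((‖a n‖ * ((1:ℝ)/2)^n) * T) := by
        intro n hn
        have he : ∑ m ∈ s.erase n,
            (ε^2/4) * ((‖a n‖ * ((1:ℝ)/2)^n) * (‖a m‖ * ((1:ℝ)/2)^m))
            = (ε^2/4) * ((‖a n‖ * ((1:ℝ)/2)^n) *
              ∑ m ∈ s.erase n, ‖a m‖ * ((1:ℝ)/2)^m) := by
          rw [Finset.mul_sum, Finset.mul_sum]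
        rw [he]
        have hsub : ∑ m ∈ s.erase n, ‖a m‖ * ((1:ℝ)/2)^m ≤ T :=
          Finset.sum_le_sum_of_subset_of_nonneg (Finset.erase_subset n s)
            (fun m _ _ => by positivity)
        have h0 : (0:ℝ) ≤ ‖a n‖ * ((1:ℝ)/2)^n := by positivity
        have h1 : (0:ℝ) ≤ ε^2/4 := by positivity
        exact mul_le_mul_of_nonneg_left (mul_le_mul_of_nonneg_left hsub h0) h1
      calc ∑ n ∈ s, ∑ m ∈ s.erase n,
          (ε^2/4) * ((‖a n‖ * ((1:ℝ)/2)^n) * (‖a m‖ * ((1:ℝ)/2)^m))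
          ≤ ∑ n ∈ s, (ε^2/4) * ((‖a n‖ * ((1:ℝ)/2)^n) * T) := Finset.sum_le_sum inner_le
      _ = (ε^2/4) * (T * T) := by
          rw [← Finset.mul_sum]
          congr 1
          rw [← Finset.sum_mul, hT]
    calc |E| ≤ (ε^2/4) * (T*T) := step1.trans step2
    _ = (ε^2/4) * T^2 := by ring
    _ ≤ (ε^2/4) * (2*Q) := mul_le_mul_of_nonneg_left hT2 (by positivity)
    _ = ε^2/2 * Q := by ring
  have hD_low : ε^2 * Q ≤ ∑ n ∈ s, ‖a n‖^2 * ‖v n‖^2 := by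
    rw [hQ, Finset.mul_sum]
    refine Finset.sum_le_sum fun n _ => ?_
    have h1 : ε^2 ≤ ‖v n‖^2 := by nlinarith [hlow n, norm_nonneg (v n)]
    nlinarith [sq_nonneg ‖a n‖]
  have hD_up : ∑ n ∈ s, ‖a n‖^2 * ‖v n‖^2 ≤ 4 * Q := by
    rw [hQ, Finset.mul_sum]
    refine Finset.sum_le_sum fun n _ => ?_
    have h1 : ‖v n‖^2 ≤ 4 := by nlinarith [hup n, norm_nonneg (v n)]
    nlinarith [sq_nonneg ‖a n‖]
  obtain ⟨hE1, hE2⟩ := abs_le.1 hEbound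
  constructor
  · nlinarith
  · nlinarith

noncomputable section

/-- A sequence is *uniformly minimal* if it admits a biorthogonal system of uniformly
bounded norms. -/
def UniformlyMinimal {H : Type*} [NormedAddCommGroup H] [InnerProductSpace ℂ H]
    (v : ℕ → H) : Prop :=
  ∃ (y : ℕ → H) (M : ℝ), (∀ n m, (inner ℂ (v n) (y m) : ℂ) = if n = m then 1 else 0) ∧
    ∀ m, ‖y m‖ ≤ M

/-- A sequence is *minimal* if no element lies in the closed linear span of the others. -/
def MinimalSeq {H : Type*} [NormedAddCommGroup H] [InnerProductSpace ℂ H] (v : ℕ → H) : Prop :=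
  ∀ m, v m ∉ closure ((Submodule.span ℂ (v '' {n | n ≠ m}) : Submodule ℂ H) : Set H)

set_option maxHeartbeats 2000000 in
/-- If a normalized sequence `{xₙ}` in a separable Hilbert space is uniformly minimal and
contains no Riesz subsequence, then it contains a subsequence `{x_{n_k}}` converging weakly
to some `x₀` such that `{x_{n_k} - x₀}` is a Riesz sequence and `x₀` is not in the closed
linear span of `{x_{n_k} - x₀}`. -/
theorem stmt3 {H : Type*} [NormedAddCommGroup H] [InnerProductSpace ℂ H] [CompleteSpace H]
    [TopologicalSpace.SeparableSpace H] (x : ℕ → H) (hx : ∀ n, ‖x n‖ = 1)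
    (hum : UniformlyMinimal x)
    (hnr : ¬ ∃ φ : ℕ → ℕ, StrictMono φ ∧ RieszSeq (x ∘ φ)) :
    ∃ (φ : ℕ → ℕ) (x0 : H), StrictMono φ ∧
      (∀ y : H, Tendsto (fun j => (inner ℂ (x (φ j)) y : ℂ)) atTop (nhds (inner ℂ x0 y))) ∧
      RieszSeq (fun j => x (φ j) - x0) ∧
      x0 ∉ closure
        ((Submodule.span ℂ (Set.range fun j => x (φ j) - x0) : Submodule ℂ H) : Set H) := by
  classical
  obtain ⟨y, M, hbi, hyM⟩ := hum
  have hM1 : (1:ℝ) ≤ M := by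
    have h0 : (inner ℂ (x 0) (y 0) : ℂ) = 1 := by simpa using hbi 0 0
    have h2 := norm_inner_le_norm (𝕜 := ℂ) (x 0) (y 0)
    rw [h0, hx 0, one_mul, norm_one] at h2
    exact h2.trans (hyM 0)
  have hMpos : (0:ℝ) < M := lt_of_lt_of_le one_pos hM1
  have hsep : ∀ n m, n ≠ m → 1/M ≤ ‖x n - x m‖ := by
    intro n m hnm
    have h1 : (inner ℂ (x n - x m) (y m) : ℂ) = -1 := by
      rw [inner_sub_left, hbi n m, hbi m m]
      simp [hnm]
    have h2 := norm_inner_le_norm (𝕜 := ℂ) (x n - x m) (y m)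
    rw [h1] at h2
    simp only [norm_neg, norm_one] at h2
    rw [div_le_iff₀ hMpos]
    calc (1:ℝ) ≤ ‖x n - x m‖ * ‖y m‖ := h2
    _ ≤ ‖x n - x m‖ * M := mul_le_mul_of_nonneg_left (hyM m) (norm_nonneg _)
  obtain ⟨ψ₀, x₀, hψ₀, hw₀⟩ := weak_subseq x (fun n => (hx n).le)
  have hx₀ : ‖x₀‖ ≤ 1 := by
    rcases eq_or_ne x₀ 0 with h | h
    · simp [h]
    have h1 : Tendsto (fun j => ‖(inner ℂ (x (ψ₀ j)) x₀ : ℂ)‖) atTop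
        (𝓝 ‖(inner ℂ x₀ x₀ : ℂ)‖) := (hw₀ x₀).norm
    have h2 : ‖(inner ℂ x₀ x₀ : ℂ)‖ ≤ ‖x₀‖ :=
      le_of_tendsto h1 (Filter.Eventually.of_forall fun j =>
        (norm_inner_le_norm _ _).trans (by rw [hx, one_mul]))
    have h3 : ‖(inner ℂ x₀ x₀ : ℂ)‖ = ‖x₀‖^2 := by
      rw [inner_self_eq_norm_sq_to_K]
      norm_cast
      simp [abs_of_nonneg (norm_nonneg x₀), sq_abs]
    rw [h3] at h2
    nlinarith [norm_nonneg x₀, (norm_pos_iff.2 h : (0:ℝ) < ‖x₀‖)]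
  set ε : ℝ := 1/(2*M) with hε_def
  have hεpos : 0 < ε := by positivity
  have htail : ∃ J, ∀ j, J ≤ j → ε ≤ ‖x (ψ₀ j) - x₀‖ := by
    by_contra hcon
    push_neg at hcon
    obtain ⟨j₁, hj₁, hj₁'⟩ := hcon 0
    obtain ⟨j₂, hj₂, hj₂'⟩ := hcon (j₁+1)
    have hne : ψ₀ j₁ ≠ ψ₀ j₂ := fun h => by
      have := hψ₀.injective h
      omega
    have hs := hsep _ _ hne
    have htri : ‖x (ψ₀ j₁) - x (ψ₀ j₂)‖ < 2*ε := by
      calc ‖x (ψ₀ j₁) - x (ψ₀ j₂)‖ ≤ ‖x (ψ₀ j₁) - x₀‖ + ‖x₀ - x (ψ₀ j₂)‖ :=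
            norm_sub_le_norm_sub_add_norm_sub _ _ _
      _ = ‖x (ψ₀ j₁) - x₀‖ + ‖x (ψ₀ j₂) - x₀‖ := by rw [norm_sub_rev x₀]
      _ < ε + ε := add_lt_add hj₁' hj₂'
      _ = 2*ε := by ring
    have h2ε : 2*ε = 1/M := by
      rw [hε_def]
      field_simp
    linarith
  obtain ⟨J, hJ⟩ := htail
  set ψ : ℕ → ℕ := fun j => ψ₀ (j + J) with hψ_def
  have hψmono : StrictMono ψ := fun a b h => hψ₀ (by omega)
  have hw : ∀ w : H, Tendsto (fun j => (inner ℂ (x (ψ j)) w : ℂ)) atTop (𝓝 (inner ℂ x₀ w)) :=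
    fun w => (hw₀ w).comp (tendsto_add_atTop_nat J)
  set u : ℕ → H := fun j => x (ψ j) - x₀ with hu_def
  have hu_low : ∀ j, ε ≤ ‖u j‖ := fun j => hJ (j + J) (by omega)
  have hu_up : ∀ j, ‖u j‖ ≤ 2 := fun j => (norm_sub_le _ _).trans (by rw [hx]; linarith)
  have hweak0 : ∀ w : H, Tendsto (fun K => (inner ℂ w (u K) : ℂ)) atTop (𝓝 0) := by
    intro w
    have h1 : Tendsto (fun K => (inner ℂ (u K) w : ℂ)) atTop (𝓝 0) := by
      have h2 := (hw w).sub_const (inner ℂ x₀ w)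
      simp only [sub_self] at h2
      refine h2.congr fun K => ?_
      rw [hu_def]
      rw [inner_sub_left]
    have h3 := h1.star
    simp only [star_zero] at h3
    refine h3.congr fun K => ?_
    rw [← inner_conj_symm, starRingEnd_apply, star_star]
  set β : ℝ := ε^2/4 with hβ_def
  have hβpos : 0 < β := by positivity
  set η : ℝ := if x₀ = 0 then 1 else ε * ‖x₀‖^2/16 with hη_def
  have hηpos : 0 < η := by
    rw [hη_def]
    split_ifs with h
    · norm_num
    · have : 0 < ‖x₀‖ := norm_pos_iff.2 h
      positivity
  have Hstep : ∀ (P jj : ℕ), ∃ K, P < K ∧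
      (∀ m, m ≤ P → ‖(inner ℂ (u m) (u K) : ℂ)‖ ≤ β * ((1:ℝ)/2)^(m + jj)) ∧
      ‖(inner ℂ x₀ (u K) : ℂ)‖ ≤ η * ((1:ℝ)/2)^(jj+1) := by
    intro P jj
    have h1 : ∀ᶠ K in atTop, P < K := eventually_gt_atTop P
    have h2 : ∀ᶠ K in atTop, ∀ m ∈ Finset.range (P+1),
        ‖(inner ℂ (u m) (u K) : ℂ)‖ ≤ β * ((1:ℝ)/2)^(m + jj) := by
      rw [eventually_all_finset]
      intro m _
      have hm := (hweak0 (u m)).norm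
      simp only [norm_zero] at hm
      exact hm.eventually (ge_mem_nhds (by positivity))
    have h3 : ∀ᶠ K in atTop, ‖(inner ℂ x₀ (u K) : ℂ)‖ ≤ η * ((1:ℝ)/2)^(jj+1) := by
      have hm := (hweak0 x₀).norm
      simp only [norm_zero] at hm
      exact hm.eventually (ge_mem_nhds (by positivity))
    obtain ⟨K, hK1, hK2, hK3⟩ := (h1.and (h2.and h3)).exists
    exact ⟨K, hK1, fun m hm => hK2 m (Finset.mem_range.2 (by omega)), hK3⟩
  choose Kf hKlt hKsmall hKx using Hstep
  set k : ℕ → ℕ := fun j => Nat.rec (Kf 0 0) (fun j ih => Kf ih (j+1)) j with hk_def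
  have hksucc : ∀ j, k (j+1) = Kf (k j) (j+1) := fun j => rfl
  have hkmono : StrictMono k := strictMono_nat_of_lt_succ fun j => by
    rw [hksucc]
    exact hKlt (k j) (j+1)
  have hkA : ∀ j, ‖(inner ℂ x₀ (u (k j)) : ℂ)‖ ≤ η * ((1:ℝ)/2)^(j+1) := by
    intro j
    cases j with
    | zero => exact hKx 0 0
    | succ j => exact hKx (k j) (j+1)
  have hkB : ∀ i j, i < j → ‖(inner ℂ (u (k i)) (u (k j)) : ℂ)‖ ≤ β * ((1:ℝ)/2)^(i + j) := by
    intro i j hij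
    obtain ⟨j', rfl⟩ : ∃ j', j = j'+1 := ⟨j-1, by omega⟩
    have hm : k i ≤ k j' := hkmono.monotone (by omega)
    have h1 := hKsmall (k j') (j'+1) (k i) hm
    rw [← hksucc] at h1
    refine h1.trans ?_
    have h2 : i ≤ k i := hkmono.le_apply
    have h3 : ((1:ℝ)/2)^(k i + (j'+1)) ≤ ((1:ℝ)/2)^(i + (j'+1)) :=
      pow_le_pow_of_le_one (by norm_num) (by norm_num) (by omega)
    exact mul_le_mul_of_nonneg_left h3 hβpos.le
  set φ : ℕ → ℕ := fun j => ψ (k j) with hφ_def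
  have hφmono : StrictMono φ := fun a b h => hψmono (hkmono h)
  set v : ℕ → H := fun j => x (φ j) - x₀ with hv_def
  have hvu : ∀ j, v j = u (k j) := fun j => rfl
  have hv_low : ∀ j, ε ≤ ‖v j‖ := fun j => hu_low (k j)
  have hv_up : ∀ j, ‖v j‖ ≤ 2 := fun j => hu_up (k j)
  have hsmall : ∀ i j, i ≠ j → ‖(inner ℂ (v i) (v j) : ℂ)‖ ≤ ε^2/4 * ((1:ℝ)/2)^(i+j) := by
    intro i j hij
    rcases lt_or_gt_of_ne hij with h | h
    · exact hkB i j h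
    · have h1 := hkB j i h
      rw [hvu i, hvu j, ← inner_conj_symm, RCLike.norm_conj, Nat.add_comm i j]
      exact h1
  have hRiesz := riesz_bounds v ε hεpos hv_low hv_up hsmall
  have hvx : ∀ j, v j = x (φ j) - x₀ := fun j => rfl
  have hx₀ne : x₀ ≠ 0 := by
    intro h0
    refine hnr ⟨φ, hφmono, ε^2/2, 4 + ε^2/2, by positivity, by nlinarith, fun a s => ?_⟩
    have := hRiesz a s
    have he : ∑ n ∈ s, a n • (x ∘ φ) n = ∑ n ∈ s, a n • v n := by
      refine Finset.sum_congr rfl fun n _ => ?_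
      rw [hvx n, h0, sub_zero]
      rfl
    rw [he]
    exact this
  have hηeq : η = ε * ‖x₀‖^2/16 := by rw [hη_def, if_neg hx₀ne]
  have hx₀pos : (0:ℝ) < ‖x₀‖ := norm_pos_iff.2 hx₀ne
  refine ⟨φ, x₀, hφmono, fun w => (hw w).comp hkmono.tendsto_atTop, ?_, ?_⟩
  · exact ⟨ε^2/2, 4 + ε^2/2, by positivity, by nlinarith, hRiesz⟩
  · intro hmem
    set δ : ℝ := min (‖x₀‖/4) 1 with hδ_def
    have hδpos : 0 < δ := by
      rw [hδ_def]
      exact lt_min (by positivity) one_pos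
    obtain ⟨w, hwspan, hwdist⟩ := Metric.mem_closure_iff.1 hmem δ hδpos
    obtain ⟨cf, hcf⟩ := Finsupp.mem_span_range_iff_exists_finsupp.1 hwspan
    set s : Finset ℕ := cf.support with hs_def
    have hws : ∑ n ∈ s, cf n • v n = w := hcf
    set Q : ℝ := ∑ n ∈ s, ‖cf n‖^2 with hQ_def
    have hQ0 : 0 ≤ Q := Finset.sum_nonneg fun n _ => by positivity
    have hwn : ‖w‖ ≤ ‖x₀‖ + δ := by
      have h1 : ‖w‖ - ‖x₀‖ ≤ ‖w - x₀‖ := norm_sub_norm_le _ _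
      have h2 : ‖w - x₀‖ = dist x₀ w := by rw [dist_eq_norm, norm_sub_rev]
      linarith [hwdist, h1, h2 ▸ h1]
    have hδle : δ ≤ 1 := min_le_right _ _
    have hδle2 : δ ≤ ‖x₀‖/4 := min_le_left _ _
    have hw2 : ‖w‖ ≤ 2 := by linarith
    have hQle : ε^2/2 * Q ≤ 4 := by
      have h1 := (hRiesz (fun n => cf n) s).1
      rw [hws] at h1
      nlinarith [norm_nonneg w]
    have hcfb : ∀ n ∈ s, ‖cf n‖ ≤ 3/ε := by
      intro n hn
      have h1 : ‖cf n‖^2 ≤ Q :=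
        Finset.single_le_sum (f := fun n => ‖cf n‖^2) (fun m _ => by positivity) hn
      have h2 : Q ≤ 8/ε^2 := by
        rw [le_div_iff₀ (by positivity)]
        nlinarith
      have h3 : ‖cf n‖^2 ≤ (3/ε)^2 := by
        refine (h1.trans h2).trans ?_
        have h9 : (3/ε)^2 = 9/ε^2 := by rw [div_pow]; norm_num
        rw [h9]
        gcongr
        norm_num
      have h4 : (0:ℝ) ≤ 3/ε := by positivity
      nlinarith [norm_nonneg (cf n)]
    have hinw : ‖(inner ℂ x₀ w : ℂ)‖ ≤ 3/ε * η := by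
      have h1 : (inner ℂ x₀ w : ℂ) = ∑ n ∈ s, cf n * inner ℂ x₀ (v n) := by
        rw [← hws, inner_sum]
        exact Finset.sum_congr rfl fun n _ => by rw [inner_smul_right]
      rw [h1]
      calc ‖∑ n ∈ s, cf n * (inner ℂ x₀ (v n) : ℂ)‖
          ≤ ∑ n ∈ s, ‖cf n * (inner ℂ x₀ (v n) : ℂ)‖ := norm_sum_le _ _
      _ ≤ ∑ n ∈ s, (3/ε) * (η * ((1:ℝ)/2)^(n+1)) := by
          refine Finset.sum_le_sum fun n hn => ?_
          rw [norm_mul]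
          have hA := hkA n
          rw [← hvu n] at hA
          exact mul_le_mul (hcfb n hn) hA (norm_nonneg _) (by positivity)
      _ = (3/ε * η) * ∑ n ∈ s, ((1:ℝ)/2)^(n+1) := by
          rw [Finset.mul_sum]
          exact Finset.sum_congr rfl fun n _ => by ring
      _ ≤ (3/ε * η) * 1 := by
          refine mul_le_mul_of_nonneg_left (sum_half_succ s) (by positivity)
      _ = 3/ε * η := mul_one _
    have hfinal : ‖x₀‖^2 ≤ ‖x₀‖ * δ + 3/ε * η := by
      have h1 : (inner ℂ x₀ x₀ : ℂ) = inner ℂ x₀ (x₀ - w) + inner ℂ x₀ w := by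
        rw [inner_sub_right]
        ring
      have h2 : ‖x₀‖^2 = ((inner ℂ x₀ x₀ : ℂ)).re := (inner_self_eq_norm_sq (𝕜 := ℂ) x₀).symm
      rw [h2, h1, Complex.add_re]
      have h3 : ((inner ℂ x₀ (x₀ - w) : ℂ)).re ≤ ‖x₀‖ * δ := by
        refine (Complex.re_le_norm _).trans ?_
        refine (norm_inner_le_norm _ _).trans ?_
        have : ‖x₀ - w‖ = dist x₀ w := dist_eq_norm _ _ |>.symm
        rw [this]
        exact mul_le_mul_of_nonneg_left hwdist.le (norm_nonneg _)
      have h4 : ((inner ℂ x₀ w : ℂ)).re ≤ 3/ε * η := by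
        refine (Complex.re_le_norm _).trans ?_
        exact hinw
      linarith
    rw [hηeq] at hfinal
    have hc1 : 3/ε * (ε * ‖x₀‖^2/16) = 3 * ‖x₀‖^2/16 := by
      field_simp
    rw [hc1] at hfinal
    nlinarith [hx₀pos, hδle2]
end
end

section
/- Let {λ_n} ⊂ ℂ₊ be a lacunary sequence in a generalized Stolz domain Γ_{γ,β} = {z : Im z > γ|Re z|^β, |z| > 1} with |λ_{n+1}| > 2|λ_n|. Then the canonical product G(z) = Π_n (1 - z/λ_n) converges locally uniformly and for every N > 0, |x|^{-N}|G(x)| → ∞ as |x| → ∞ along the real axis. -/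
open Filter Topology

noncomputable section

set_option maxHeartbeats 1000000

private lemma aux_one_le_prod {ι : Type*} (s : Finset ι) (a : ι → ℝ) (ha : ∀ i ∈ s, 0 ≤ a i) :
    1 ≤ ∏ i ∈ s, (1 + a i) := by
  calc (1:ℝ) = ∏ _i ∈ s, 1 := by simp
  _ ≤ ∏ i ∈ s, (1 + a i) := Finset.prod_le_prod (by simp) (fun i hi => by linarith [ha i hi])

private lemma aux_prod_le_exp {ι : Type*} (s : Finset ι) (a : ι → ℝ) (ha : ∀ i ∈ s, 0 ≤ a i) :
    ∏ i ∈ s, (1 + a i) ≤ Real.exp (∑ i ∈ s, a i) := by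
  rw [Real.exp_sum]
  exact Finset.prod_le_prod (fun i hi => by linarith [ha i hi])
    (fun i hi => by linarith [Real.add_one_le_exp (a i)])

private lemma aux_weier_upper {ι : Type*} (s : Finset ι) (a : ι → ℂ) :
    ‖∏ i ∈ s, (1 + a i) - 1‖ ≤ ∏ i ∈ s, (1 + ‖a i‖) - 1 := by
  classical
  induction s using Finset.cons_induction with
  | empty => simp
  | cons i s hi ih =>
    rw [Finset.prod_cons, Finset.prod_cons]
    have hQ : 1 ≤ ∏ j ∈ s, (1 + ‖a j‖) :=
      aux_one_le_prod s _ (fun j _ => norm_nonneg _)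
    have key : (1 + a i) * ∏ j ∈ s, (1 + a j) - 1
        = (1 + a i) * (∏ j ∈ s, (1 + a j) - 1) + a i := by ring
    rw [key]
    have h1 : ‖1 + a i‖ ≤ 1 + ‖a i‖ := by
      simpa using norm_add_le 1 (a i)
    calc ‖(1 + a i) * (∏ j ∈ s, (1 + a j) - 1) + a i‖
        ≤ ‖(1 + a i) * (∏ j ∈ s, (1 + a j) - 1)‖ + ‖a i‖ :=
          norm_add_le _ _
      _ = ‖1 + a i‖ * ‖∏ j ∈ s, (1 + a j) - 1‖ + ‖a i‖ := by
          rw [norm_mul]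
      _ ≤ (1 + ‖a i‖) * (∏ j ∈ s, (1 + ‖a j‖) - 1) + ‖a i‖ := by
          have := mul_le_mul h1 ih (norm_nonneg _) (by positivity)
          linarith
      _ = (1 + ‖a i‖) * ∏ j ∈ s, (1 + ‖a j‖) - 1 := by ring

private lemma aux_weier_lower (s : Finset ℕ) (a : ℕ → ℝ) (h0 : ∀ i ∈ s, 0 ≤ a i)
    (h1 : ∀ i ∈ s, a i ≤ 1) : 1 - ∑ i ∈ s, a i ≤ ∏ i ∈ s, (1 - a i) := by
  classical
  induction s using Finset.cons_induction with
  | empty => simp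
  | cons i s hi ih =>
    rw [Finset.prod_cons, Finset.sum_cons]
    have ih' := ih (fun j hj => h0 j (Finset.mem_cons_of_mem hj))
      (fun j hj => h1 j (Finset.mem_cons_of_mem hj))
    have hsum : 0 ≤ ∑ j ∈ s, a j := Finset.sum_nonneg
      (fun j hj => h0 j (Finset.mem_cons_of_mem hj))
    have hai0 := h0 i (Finset.mem_cons_self i s)
    have hai1 := h1 i (Finset.mem_cons_self i s)
    nlinarith [mul_le_mul_of_nonneg_left ih' (by linarith : (0:ℝ) ≤ 1 - a i)]


/-- Let `{λₙ} ⊂ ℂ₊` be a lacunary sequence (`|λ_{n+1}| > 2|λₙ|`) contained in a generalized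
Stolz domain `Γ_{γ,β} = {z : Im z > γ|Re z|^β, |z| > 1}`.  Then the canonical product
`G(z) = Π_n (1 - z/λₙ)` converges locally uniformly, and for every `N > 0`,
`|x|^{-N}|G(x)| → ∞` as `|x| → ∞` along the real axis. -/
theorem stmt8 (γ β : ℝ) (hγ : 0 < γ) (lam : ℕ → ℂ)
    (hmem : ∀ n, 1 < ‖lam n‖ ∧ γ * |(lam n).re| ^ β < (lam n).im)
    (hlac : ∀ n, 2 * ‖lam n‖ < ‖lam (n + 1)‖) :
    (∀ z : ℂ, Multipliable (fun n => 1 - z / lam n)) ∧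
    TendstoLocallyUniformly (fun (N : ℕ) (z : ℂ) => ∏ n ∈ Finset.range N, (1 - z / lam n))
      (fun z => ∏' n, (1 - z / lam n)) atTop ∧
    ∀ N : ℝ, 0 < N →
      Tendsto (fun x : ℝ => |x| ^ (-N) * ‖∏' n, (1 - (x : ℂ) / lam n)‖)
        (comap (fun x : ℝ => |x|) atTop) atTop := by
  have hApos : ∀ n, (0:ℝ) < ‖lam n‖ := fun n => lt_trans one_pos (hmem n).1
  have hne0 : ∀ n, lam n ≠ 0 := by
    intro n h
    have := (hmem n).1
    rw [h] at this; simp at this; linarith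
  have hgrow : ∀ n j, (2:ℝ)^j * ‖lam n‖ ≤ ‖lam (n + j)‖ := by
    intro n j
    induction j with
    | zero => simp
    | succ j ih =>
      have h2 := hlac (n + j)
      calc (2:ℝ)^(j+1) * ‖lam n‖ = 2 * ((2:ℝ)^j * ‖lam n‖) := by ring
        _ ≤ 2 * ‖lam (n + j)‖ := by linarith
        _ ≤ ‖lam (n + (j+1))‖ := le_of_lt (by exact_mod_cast h2)
  have hpow : ∀ n, (2:ℝ)^n ≤ ‖lam n‖ := by
    intro n
    have h := hgrow 0 n
    simp only [Nat.zero_add] at h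
    have h0 : (1:ℝ) ≤ ‖lam 0‖ := le_of_lt (hmem 0).1
    nlinarith [pow_pos (show (0:ℝ) < 2 by norm_num) n]
  have habs_le : ∀ (z : ℂ) (n : ℕ), ‖z / lam n‖ ≤ ‖z‖ * (1/2)^n := by
    intro z n
    rw [norm_div, div_le_iff₀ (hApos n)]
    have e : ‖z‖ * (1/2:ℝ)^n * (2:ℝ)^n = ‖z‖ := by
      rw [mul_assoc, ← mul_pow]; norm_num
    calc ‖z‖ = ‖z‖ * (1/2:ℝ)^n * (2:ℝ)^n := e.symm
      _ ≤ ‖z‖ * (1/2)^n * ‖lam n‖ :=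
        mul_le_mul_of_nonneg_left (hpow n) (by positivity)
  have hMulShift : ∀ (z : ℂ) (k : ℕ), Multipliable (fun n => 1 - z / lam (n + k)) := by
    intro z k
    by_cases hz : ∀ n, (1:ℂ) - z / lam (n + k) ≠ 0
    · obtain ⟨j, hj⟩ := pow_unbounded_of_one_lt (R := ℝ) (2 * ‖z‖) one_lt_two
      apply Multipliable.comp_nat_add (k := j)
      have hsm : ∀ n : ℕ, ‖z / lam (n + j + k)‖ ≤ 1/2 := by
        intro n
        have h1 := habs_le z (n + j + k)
        have e1 : ((1:ℝ)/2)^(n+j+k) ≤ (1/2)^j :=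
          pow_le_pow_of_le_one (by norm_num) (by norm_num) (by omega)
        have e2 : ‖z‖ * ((1:ℝ)/2)^j ≤ 1/2 := by
          have h3 : (2:ℝ)^j * ((1:ℝ)/2)^j = 1 := by rw [← mul_pow]; norm_num
          nlinarith [pow_pos (show (0:ℝ) < 1/2 by norm_num) j]
        calc ‖z / lam (n + j + k)‖ ≤ ‖z‖ * (1/2)^(n+j+k) := h1
          _ ≤ ‖z‖ * (1/2)^j := by
              exact mul_le_mul_of_nonneg_left e1 (norm_nonneg z)
          _ ≤ 1/2 := e2
      have hlog : Summable (fun n => Complex.log (1 - z / lam (n + j + k))) := by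
        apply Summable.of_norm_bounded
          (g := fun n => ((3/2) * (‖z‖ * (1/2)^(j+k))) * (1/2:ℝ)^n)
        · exact Summable.mul_left _ summable_geometric_two
        · intro n
          have hrw : (1:ℂ) - z / lam (n + j + k) = 1 + -(z / lam (n + j + k)) := by ring
          rw [hrw]
          have hb : ‖-(z / lam (n + j + k))‖ ≤ 1/2 := by
            simpa using hsm n
          refine le_trans (Complex.norm_log_one_add_half_le_self hb) ?_
          have : ‖-(z / lam (n + j + k))‖ = ‖z / lam (n + j + k)‖ := by
            simp
          rw [this]
          have h1 := habs_le z (n + j + k)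
          have e : ‖z‖ * (1/2:ℝ)^(n+j+k) =
              (‖z‖ * (1/2)^(j+k)) * (1/2)^n := by
            rw [show n + j + k = n + (j + k) by omega, pow_add]; ring
          nlinarith [norm_nonneg (z / lam (n + j + k))]
      have hne : ∀ n : ℕ, (1:ℂ) - z / lam (n + j + k) ≠ 0 := by
        intro n
        have := hz (n + j)
        simpa [show n + j + k = n + j + k from rfl, add_assoc] using this
      have hprod := hlog.hasSum.cexp
      have heq : (Complex.exp ∘ fun n => Complex.log (1 - z / lam (n + j + k)))
          = fun n => 1 - z / lam (n + j + k) := funext fun n => Complex.exp_log (hne n)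
      rw [heq] at hprod
      exact ⟨_, hprod⟩
    · push_neg at hz
      obtain ⟨m, hm⟩ := hz
      exact ⟨0, by
        have : (fun s : Finset ℕ => ∏ i ∈ s, (1 - z / lam (i + k))) =ᶠ[atTop]
            (fun _ => (0:ℂ)) := by
          filter_upwards [eventually_ge_atTop ({m} : Finset ℕ)] with s hs
          exact Finset.prod_eq_zero (hs (Finset.mem_singleton_self m)) hm
        exact Tendsto.congr' this.symm tendsto_const_nhds⟩
  have hMul : ∀ z : ℂ, Multipliable (fun n => 1 - z / lam n) := by
    intro z
    simpa using hMulShift z 0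
  refine ⟨hMul, ?_, ?_⟩
  · rw [tendstoLocallyUniformly_iff_forall_isCompact]
    intro Kset hKset
    obtain ⟨R0, hR0⟩ := hKset.isBounded.subset_closedBall 0
    set R := max R0 0 with hRdef
    have hRnn : (0:ℝ) ≤ R := le_max_right _ _
    have hKR : Kset ⊆ Metric.closedBall 0 R :=
      subset_trans hR0 (Metric.closedBall_subset_closedBall (le_max_left _ _))
    rw [Metric.tendstoUniformlyOn_iff]
    intro ε hε
    have hD : Tendsto (fun n : ℕ => Real.exp (2*R) * (Real.exp (2*R*(1/2)^n) - 1)) atTop (𝓝 0) := by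
      have h0 : Tendsto (fun n : ℕ => 2*R*(1/2:ℝ)^n) atTop (𝓝 0) := by
        simpa using (tendsto_pow_atTop_nhds_zero_of_lt_one (show (0:ℝ) ≤ 1/2 by norm_num)
          (by norm_num)).const_mul (2*R)
      have h1 : Tendsto (fun n : ℕ => Real.exp (2*R) * (Real.exp (2*R*(1/2)^n) - 1)) atTop
          (𝓝 (Real.exp (2*R) * (Real.exp 0 - 1))) :=
        (((Real.continuous_exp.tendsto 0).comp h0).sub tendsto_const_nhds).const_mul (Real.exp (2*R))
      simpa using h1
    filter_upwards [hD.eventually (gt_mem_nhds hε)] with n hn z hz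
    have hzR : ‖z‖ ≤ R := by
      have := hKR hz
      simpa [Complex.dist_eq] using Metric.mem_closedBall.1 this
    have htail : Multipliable (fun j => 1 - z / lam (j + n)) := hMulShift z n
    have hsplit := Multipliable.prod_mul_tprod_nat_mul' (f := fun i => 1 - z / lam i) (k := n) htail
    set T := ∏' (j : ℕ), (1 - z / lam (j + n)) with hTdef
    set P := ∏ i ∈ Finset.range n, (1 - z / lam i) with hPdef
    have hdist : dist (∏' i, (1 - z / lam i)) P = ‖P‖ * ‖T - 1‖ := by
      rw [Complex.dist_eq, ← hsplit, ← norm_mul]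
      congr 1; ring
    -- bound on |P|
    have hgeo : ∀ s : Finset ℕ, ∀ m : ℕ, ∑ i ∈ s, ‖z‖ * (1/2:ℝ)^(i+m) ≤ 2*R*(1/2)^m := by
      intro s m
      have hsummable : Summable (fun i : ℕ => ‖z‖ * (1/2:ℝ)^(i+m)) := by
        have : (fun i : ℕ => ‖z‖ * (1/2:ℝ)^(i+m))
            = fun i : ℕ => (‖z‖ * (1/2:ℝ)^m) * (1/2)^i := by
          funext i; rw [pow_add]; ring
        rw [this]
        exact Summable.mul_left _ summable_geometric_two
      have h1 : ∑ i ∈ s, ‖z‖ * (1/2:ℝ)^(i+m)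
          ≤ ∑' (i : ℕ), ‖z‖ * (1/2:ℝ)^(i+m) :=
        Summable.sum_le_tsum s (fun i _ => by positivity) hsummable
      have h2 : ∑' (i : ℕ), ‖z‖ * (1/2:ℝ)^(i+m)
          = (‖z‖ * (1/2:ℝ)^m) * 2 := by
        have : (fun i : ℕ => ‖z‖ * (1/2:ℝ)^(i+m))
            = fun i : ℕ => (‖z‖ * (1/2:ℝ)^m) * (1/2)^i := by
          funext i; rw [pow_add]; ring
        rw [this, tsum_mul_left, tsum_geometric_two]
      have h3 : ‖z‖ * (1/2:ℝ)^m * 2 ≤ 2*R*(1/2)^m := by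
        have := pow_nonneg (show (0:ℝ) ≤ 1/2 by norm_num) m
        nlinarith
      linarith
    have hPle : ‖P‖ ≤ Real.exp (2*R) := by
      rw [hPdef, norm_prod]
      have step1 : ∏ i ∈ Finset.range n, ‖1 - z / lam i‖
          ≤ ∏ i ∈ Finset.range n, (1 + ‖z / lam i‖) := by
        apply Finset.prod_le_prod (fun i _ => norm_nonneg _)
        intro i _
        have hrw : (1:ℂ) - z / lam i = 1 + -(z / lam i) := by ring
        rw [hrw]
        calc ‖1 + -(z / lam i)‖ ≤ ‖1‖ + ‖-(z / lam i)‖ :=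
              norm_add_le _ _
          _ = 1 + ‖z / lam i‖ := by simp
      have step2 := aux_prod_le_exp (Finset.range n) (fun i => ‖z / lam i‖)
        (fun i _ => norm_nonneg _)
      have step3 : ∑ i ∈ Finset.range n, ‖z / lam i‖ ≤ 2*R := by
        have h4 : ∑ i ∈ Finset.range n, ‖z / lam i‖
            ≤ ∑ i ∈ Finset.range n, ‖z‖ * (1/2:ℝ)^i :=
          Finset.sum_le_sum (fun i _ => habs_le z i)
        have h5 := hgeo (Finset.range n) 0
        simp only [Nat.add_zero, pow_zero, mul_one] at h5
        linarith
      calc ∏ i ∈ Finset.range n, ‖1 - z / lam i‖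
          ≤ ∏ i ∈ Finset.range n, (1 + ‖z / lam i‖) := step1
        _ ≤ Real.exp (∑ i ∈ Finset.range n, ‖z / lam i‖) := step2
        _ ≤ Real.exp (2*R) := Real.exp_le_exp.2 step3
    have hT1 : ‖T - 1‖ ≤ Real.exp (2*R*(1/2)^n) - 1 := by
      have hcont : Continuous (fun w : ℂ => ‖w - 1‖) :=
        continuous_norm.comp (continuous_id.sub continuous_const)
      have htt : Tendsto (fun s : Finset ℕ => ‖(∏ j ∈ s, (1 - z / lam (j+n))) - 1‖)
          atTop (𝓝 (‖T - 1‖)) := (hcont.tendsto T).comp htail.hasProd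
      refine le_of_tendsto htt (Eventually.of_forall fun s => ?_)
      have hrw : (∏ j ∈ s, ((1:ℂ) - z / lam (j+n)))
          = ∏ j ∈ s, (1 + -(z / lam (j+n))) := by
        apply Finset.prod_congr rfl; intro j _; ring
      have w1 := aux_weier_upper s (fun j => -(z / lam (j+n)))
      have w2 := aux_prod_le_exp s (fun j => ‖-(z / lam (j+n))‖)
        (fun j _ => norm_nonneg _)
      have w3 : ∑ j ∈ s, ‖-(z / lam (j+n))‖ ≤ 2*R*(1/2)^n := by
        have h4 : ∑ j ∈ s, ‖-(z / lam (j+n))‖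
            ≤ ∑ j ∈ s, ‖z‖ * (1/2:ℝ)^(j+n) := by
          apply Finset.sum_le_sum
          intro j _
          rw [norm_neg]
          exact habs_le z (j+n)
        linarith [hgeo s n]
      calc ‖(∏ j ∈ s, (1 - z / lam (j+n))) - 1‖
          = ‖(∏ j ∈ s, (1 + -(z / lam (j+n)))) - 1‖ := by rw [hrw]
        _ ≤ ∏ j ∈ s, (1 + ‖-(z / lam (j+n))‖) - 1 := w1
        _ ≤ Real.exp (∑ j ∈ s, ‖-(z / lam (j+n))‖) - 1 := by linarith
        _ ≤ Real.exp (2*R*(1/2)^n) - 1 := by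
            have := Real.exp_le_exp.2 w3; linarith
    calc dist ((fun z => ∏' i, (1 - z / lam i)) z)
          ((fun (N : ℕ) (z : ℂ) => ∏ i ∈ Finset.range N, (1 - z / lam i)) n z)
        = ‖P‖ * ‖T - 1‖ := hdist
      _ ≤ Real.exp (2*R) * (Real.exp (2*R*(1/2)^n) - 1) := by
          have h6 : (0:ℝ) ≤ Real.exp (2*R*(1/2)^n) - 1 := by
            have := Real.one_le_exp (show (0:ℝ) ≤ 2*R*(1/2)^n by positivity); linarith
          exact mul_le_mul hPle hT1 (norm_nonneg _) (Real.exp_nonneg _)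
      _ < ε := hn
  · have hmono : ∀ n m : ℕ, n ≤ m → ‖lam n‖ ≤ ‖lam m‖ := by
      intro n m h
      have hg := hgrow n (m - n)
      rw [Nat.add_sub_cancel' h] at hg
      have h1 : (1:ℝ) ≤ 2 ^ (m - n) := by
        calc (1:ℝ) = 2^0 := by norm_num
          _ ≤ 2^(m-n) := pow_le_pow_right₀ (by norm_num) (Nat.zero_le _)
      nlinarith [hApos n]
    set b := |β| + 1 with hbdef
    have hbpos : 0 < b := by positivity
    set c := min (1/2 : ℝ) (γ * (1/2 : ℝ) ^ |β|) with hcdef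
    have hcpos : 0 < c := lt_min (by norm_num) (by positivity)
    have hchalf : c ≤ 1/2 := min_le_left _ _
    -- Lemma A : Im lower bound
    have lemA : ∀ n, c * ‖lam n‖ ^ (-|β|) ≤ (lam n).im := by
      intro n
      have hA := (hmem n).1
      have him := (hmem n).2
      have hApos' := hApos n
      have hrle1 : ‖lam n‖ ^ (-|β|) ≤ 1 :=
        Real.rpow_le_one_of_one_le_of_nonpos (le_of_lt hA) (neg_nonpos.2 (abs_nonneg β))
      have hrnn : 0 ≤ ‖lam n‖ ^ (-|β|) := Real.rpow_nonneg (le_of_lt hApos') _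
      by_cases hcase : ‖lam n‖ / 2 ≤ (lam n).im
      · nlinarith [mul_le_mul_of_nonneg_left hrle1 hcpos.le]
      · push_neg at hcase
        have him0 : 0 < (lam n).im := lt_of_le_of_lt (by positivity) him
        have hre2 : ‖lam n‖ / 2 ≤ |(lam n).re| := by
          by_contra hre
          push_neg at hre
          have hsq := Complex.sq_norm (lam n)
          rw [Complex.normSq_apply] at hsq
          nlinarith [abs_nonneg (lam n).re, sq_abs (lam n).re, sq_abs (lam n).im,
            abs_of_pos him0]
        rcases le_or_gt 0 β with hβ | hβ
        · have habsb : |β| = β := abs_of_nonneg hβ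
          have hhalf : (1/2:ℝ) ≤ |(lam n).re| := by linarith
          have h1 : ((1:ℝ)/2) ^ β ≤ |(lam n).re| ^ β :=
            Real.rpow_le_rpow (by norm_num) hhalf hβ
          have h2 : c ≤ γ * (1/2:ℝ) ^ |β| := min_le_right _ _
          have h3 : γ * (1/2:ℝ)^|β| ≤ γ * |(lam n).re| ^ β := by
            rw [habsb]; exact mul_le_mul_of_nonneg_left h1 (le_of_lt hγ)
          nlinarith [mul_le_mul_of_nonneg_left hrle1 hcpos.le]
        · have habsb : |β| = -β := abs_of_neg hβ
          have hrepos : 0 < |(lam n).re| := by nlinarith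
          have hreA : |(lam n).re| ≤ ‖lam n‖ := Complex.abs_re_le_norm _
          have h1 : ‖lam n‖ ^ β ≤ |(lam n).re| ^ β :=
            Real.rpow_le_rpow_of_nonpos hrepos hreA (le_of_lt hβ)
          have h2 : c ≤ γ := by
            have h4 : (1/2:ℝ) ^ |β| ≤ 1 :=
              Real.rpow_le_one (by norm_num) (by norm_num) (abs_nonneg β)
            have h5 := min_le_right (1/2:ℝ) (γ * (1/2:ℝ)^|β|)
            nlinarith
          have h5 : -|β| = β := by rw [habsb]; ring
          rw [h5]
          have h6 : γ * ‖lam n‖ ^ β ≤ γ * |(lam n).re| ^ β :=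
            mul_le_mul_of_nonneg_left h1 hγ.le
          have h7 : c * ‖lam n‖ ^ β ≤ γ * ‖lam n‖ ^ β :=
            mul_le_mul_of_nonneg_right h2 (Real.rpow_nonneg hApos'.le β)
          linarith
    -- Lemma B : factor lower bound via Im
    have lemB : ∀ (x : ℝ) (n : ℕ), c * ‖lam n‖ ^ (-b)
        ≤ ‖1 - (x:ℂ) / lam n‖ := by
      intro x n
      have hA := hApos n
      have hne : lam n ≠ 0 := fun h => by rw [h] at hA; simp at hA
      have hrw : (1:ℂ) - (x:ℂ) / lam n = (lam n - x) / lam n := by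
        field_simp
      rw [hrw, norm_div]
      have him : (lam n).im ≤ ‖lam n - x‖ := by
        have h1 : (lam n - (x:ℂ)).im = (lam n).im := by simp
        calc (lam n).im ≤ |(lam n - (x:ℂ)).im| := by rw [h1]; exact le_abs_self _
          _ ≤ ‖lam n - x‖ := Complex.abs_im_le_norm _
      rw [le_div_iff₀ hA]
      have key : c * ‖lam n‖ ^ (-b) * ‖lam n‖
          = c * ‖lam n‖ ^ (-|β|) := by
        rw [hbdef, mul_assoc]
        congr 1
        rw [show -(|β| + 1) = -|β| + (-1) by ring, Real.rpow_add hA, Real.rpow_neg_one]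
        field_simp
      rw [key]
      exact le_trans (lemA n) him
    -- triangle bounds
    have habsx : ∀ (x : ℝ) (n : ℕ), ‖(x:ℂ)/lam n‖ = |x| / ‖lam n‖ := by
      intro x n; rw [norm_div, Complex.norm_real, Real.norm_eq_abs]
    have htri : ∀ (x : ℝ) (n : ℕ),
        (1:ℝ) ≤ ‖1 - (x:ℂ)/lam n‖ + |x| / ‖lam n‖ := by
      intro x n
      have h2 : (1:ℝ) ≤ ‖1 - (x:ℂ)/lam n‖ + ‖(x:ℂ)/lam n‖ := by
        simpa using norm_add_le (1 - (x:ℂ)/lam n) ((x:ℂ)/lam n)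
      rw [habsx x n] at h2
      exact h2
    have flow : ∀ (x : ℝ) (n : ℕ), 2 * ‖lam n‖ ≤ |x| →
        |x| / (2 * ‖lam n‖) ≤ ‖1 - (x:ℂ)/lam n‖ := by
      intro x n h
      have hA := hApos n
      have h2 : ‖(x:ℂ)/lam n‖ ≤ ‖1 - (x:ℂ)/lam n‖ + 1 := by
        calc ‖(x:ℂ)/lam n‖ = ‖((x:ℂ)/lam n - 1) + 1‖ := by
              rw [sub_add_cancel]
          _ ≤ ‖(x:ℂ)/lam n - 1‖ + ‖1‖ := norm_add_le _ _
          _ = ‖1 - (x:ℂ)/lam n‖ + 1 := by rw [norm_sub_rev]; simp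
      rw [habsx x n] at h2
      set u := |x| / (2 * ‖lam n‖) with hu
      have hu1 : 1 ≤ u := (one_le_div (by positivity)).2 h
      have e : |x| / ‖lam n‖ = 2 * u := by
        rw [hu]; field_simp
      rw [e] at h2
      linarith
    intro N hN
    set K := ⌈N + 3*b + 1⌉₊ with hKdef
    have hKge : N + 3*b + 1 ≤ (K:ℝ) := Nat.le_ceil _
    have hK1 : 1 ≤ K := Nat.one_le_ceil_iff.2 (by positivity)
    set C1 := ∏ n ∈ Finset.range K, (1 / (2 * ‖lam n‖)) with hC1def
    have hC1pos : 0 < C1 := Finset.prod_pos (fun n _ => by have := hApos n; positivity)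
    set C := C1 * (c * (4:ℝ) ^ (-b))^3 * (1/2) with hCdef
    have hCpos : 0 < C := by
      have h4 : (0:ℝ) < (4:ℝ) ^ (-b) := Real.rpow_pos_of_pos (by norm_num) _
      exact mul_pos (mul_pos hC1pos (pow_pos (mul_pos hcpos h4) 3)) (by norm_num)
    set R0 := max 1 (2 * ‖lam (K - 1)‖) with hR0def
    have hmain : ∀ x : ℝ, R0 ≤ |x| →
        C * |x| ≤ |x| ^ (-N) * ‖∏' n, (1 - (x:ℂ)/lam n)‖ := by
      intro x hx
      have ht1 : 1 ≤ |x| := le_trans (le_max_left _ _) hx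
      have htpos : 0 < |x| := lt_of_lt_of_le one_pos ht1
      have htK : 2 * ‖lam (K-1)‖ ≤ |x| := le_trans (le_max_right _ _) hx
      have hsmall : ∀ n, n < K → 2 * ‖lam n‖ ≤ |x| := by
        intro n hn
        have := hmono n (K-1) (by omega)
        linarith
      have hex : ∃ m, 4 * |x| ≤ ‖lam m‖ := by
        obtain ⟨m, hm⟩ := pow_unbounded_of_one_lt (R := ℝ) (4*|x|) one_lt_two
        exact ⟨m, le_trans (le_of_lt hm) (hpow m)⟩
      obtain ⟨M, hM4, hMlt⟩ : ∃ M, 4 * |x| ≤ ‖lam M‖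
          ∧ ∀ n, n < M → ‖lam n‖ < 4 * |x| := by
        classical
        exact ⟨Nat.find hex, Nat.find_spec hex, fun n hn => lt_of_not_ge (Nat.find_min hex hn)⟩
      have hKM : K ≤ M := by
        by_contra h
        push_neg at h
        have h1 : ‖lam M‖ ≤ ‖lam (K-1)‖ := hmono _ _ (by omega)
        linarith
      have hPabs : HasProd (fun n => ‖1 - (x:ℂ)/lam n‖)
          (‖∏' n, (1 - (x:ℂ)/lam n)‖) := by
        have := (hMul (x:ℂ)).hasProd.map (normHom : ℂ →*₀ ℝ) continuous_norm
        simpa [Function.comp_def] using this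
      have htail : Multipliable (fun j => ‖1 - (x:ℂ)/lam (j + M)‖) := by
        have := (hMulShift (x:ℂ) M).map (normHom : ℂ →*₀ ℝ) continuous_norm
        simpa [Function.comp_def] using this
      have hsplit : (∏ n ∈ Finset.range M, ‖1 - (x:ℂ)/lam n‖)
          * ∏' j, ‖1 - (x:ℂ)/lam (j + M)‖
          = ‖∏' n, (1 - (x:ℂ)/lam n)‖ := by
        rw [Multipliable.prod_mul_tprod_nat_mul' (f := fun n => ‖1 - (x:ℂ)/lam n‖) (k := M) htail]
        exact hPabs.tprod_eq
      -- tail lower bound 1/2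
      have htail_ge : (1/2:ℝ) ≤ ∏' j, ‖1 - (x:ℂ)/lam (j + M)‖ := by
        refine ge_of_tendsto htail.hasProd (Eventually.of_forall fun s => ?_)
        have hfac : ∀ j ∈ s, (1 - (1/2:ℝ)^(j+2)) ≤ ‖1 - (x:ℂ)/lam (j + M)‖ := by
          intro j _
          have hAjM : (2:ℝ)^j * (4*|x|) ≤ ‖lam (j + M)‖ := by
            rw [Nat.add_comm j M]
            calc (2:ℝ)^j * (4*|x|) ≤ 2^j * ‖lam M‖ :=
                  mul_le_mul_of_nonneg_left hM4 (pow_nonneg (by norm_num) j)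
              _ ≤ ‖lam (M + j)‖ := hgrow M j
          have h2 : |x| / ‖lam (j + M)‖ ≤ (1/2:ℝ)^(j+2) := by
            rw [div_le_iff₀ (hApos _)]
            have h3 : (1/2:ℝ)^j * 2^j = 1 := by rw [← mul_pow]; norm_num
            have h4 : (1/2:ℝ)^(j+2) = (1/2)^j * (1/4) := by rw [pow_add]; norm_num
            calc |x| = ((1/2:ℝ)^j * 2^j) * |x| := by rw [h3]; ring
              _ = (1/2:ℝ)^(j+2) * ((2:ℝ)^j * (4*|x|)) := by rw [h4]; ring
              _ ≤ (1/2:ℝ)^(j+2) * ‖lam (j + M)‖ :=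
                  mul_le_mul_of_nonneg_left hAjM (by positivity)
          have h5 := htri x (j + M)
          linarith
        have hsummable : Summable (fun j : ℕ => (1/2:ℝ)^(j+2)) := by
          have he : (fun j : ℕ => (1/2:ℝ)^(j+2)) = fun j => (1/4) * (1/2:ℝ)^j := by
            funext j; rw [pow_add]; ring
          rw [he]; exact summable_geometric_two.mul_left _
        have hs2 : ∑' (j : ℕ), (1/2:ℝ)^(j+2) = 1/2 := by
          have he : (fun j : ℕ => (1/2:ℝ)^(j+2)) = fun j => (1/4) * (1/2:ℝ)^j := by
            funext j; rw [pow_add]; ring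
          rw [he, tsum_mul_left, tsum_geometric_two]; norm_num
        have hple : ∀ i : ℕ, (1/2:ℝ)^(i+2) ≤ 1/4 := by
          intro i
          calc (1/2:ℝ)^(i+2) ≤ (1/2:ℝ)^2 :=
                pow_le_pow_of_le_one (by norm_num) (by norm_num) (by omega)
            _ = 1/4 := by norm_num
        calc (1/2:ℝ) = 1 - 1/2 := by norm_num
          _ ≤ 1 - ∑ j ∈ s, (1/2:ℝ)^(j+2) := by
              have hs1 := Summable.sum_le_tsum s (fun (i : ℕ) _ => by positivity :
                ∀ i ∉ s, (0:ℝ) ≤ (1/2:ℝ)^(i+2)) hsummable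
              linarith
          _ ≤ ∏ j ∈ s, (1 - (1/2:ℝ)^(j+2)) :=
              aux_weier_lower s _ (fun i _ => by positivity)
                (fun i _ => by linarith [hple i])
          _ ≤ ∏ j ∈ s, ‖1 - (x:ℂ)/lam (j + M)‖ :=
              Finset.prod_le_prod (fun i _ => by linarith [hple i]) hfac
      -- front bound
      have hfront : C1 * |x|^K * (c * (4*|x|)^(-b))^3
          ≤ ∏ n ∈ Finset.range M, ‖1 - (x:ℂ)/lam n‖ := by
        rw [← Finset.prod_range_mul_prod_Ico _ hKM]
        have hB1 : C1 * |x|^K ≤ ∏ n ∈ Finset.range K, ‖1 - (x:ℂ)/lam n‖ := by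
          have he : C1 * |x|^K = ∏ n ∈ Finset.range K, (|x| / (2 * ‖lam n‖)) := by
            rw [hC1def]
            rw [Finset.prod_congr rfl (fun n _ => show |x| / (2 * ‖lam n‖)
              = |x| * (1 / (2 * ‖lam n‖)) by ring), Finset.prod_mul_distrib,
              Finset.prod_const, Finset.card_range]
            ring
          rw [he]
          exact Finset.prod_le_prod (fun n _ => by positivity)
            (fun n hn => flow x n (hsmall n (Finset.mem_range.1 hn)))
        have hB2 : (c * (4*|x|)^(-b))^3 ≤ ∏ n ∈ Finset.Ico K M, ‖1 - (x:ℂ)/lam n‖ := by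
          classical
          set v := c * (4*|x|:ℝ)^(-b) with hvdef
          have hq4 : (0:ℝ) < (4*|x|:ℝ)^(-b) := Real.rpow_pos_of_pos (by linarith) _
          have hv0 : 0 ≤ v := mul_nonneg hcpos.le hq4.le
          have hv1 : v ≤ 1 := by
            have h1 : ((4*|x|):ℝ)^(-b) ≤ 1 :=
              Real.rpow_le_one_of_one_le_of_nonpos (by linarith) (by linarith)
            have h2 : (0:ℝ) ≤ ((4*|x|):ℝ)^(-b) := Real.rpow_nonneg (by linarith) _
            nlinarith
          have hstep : ∀ n ∈ Finset.Ico K M,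
              (if 2 * ‖lam n‖ ≤ |x| then (1:ℝ) else v)
              ≤ ‖1 - (x:ℂ)/lam n‖ := by
            intro n hn
            obtain ⟨hnK, hnM⟩ := Finset.mem_Ico.1 hn
            by_cases hc2 : 2 * ‖lam n‖ ≤ |x|
            · simp only [if_pos hc2]
              have h1 := flow x n hc2
              have h2 : (1:ℝ) ≤ |x| / (2*‖lam n‖) :=
                (one_le_div (by have := hApos n; positivity)).2 hc2
              linarith
            · simp only [if_neg hc2]
              have h1 := lemB x n
              have h2 : ((4*|x|):ℝ)^(-b) ≤ ‖lam n‖ ^ (-b) :=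
                Real.rpow_le_rpow_of_nonpos (hApos n) (le_of_lt (hMlt n hnM)) (by linarith)
              have h3 : c * ((4*|x|):ℝ)^(-b) ≤ c * ‖lam n‖ ^ (-b) :=
                mul_le_mul_of_nonneg_left h2 hcpos.le
              calc v ≤ c * ‖lam n‖^(-b) := h3
                _ ≤ _ := h1
          have hprodge : ∏ n ∈ Finset.Ico K M,
              (if 2 * ‖lam n‖ ≤ |x| then (1:ℝ) else v)
              ≤ ∏ n ∈ Finset.Ico K M, ‖1 - (x:ℂ)/lam n‖ :=
            Finset.prod_le_prod (fun n _ => by split <;> [norm_num; exact hv0]) hstep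
          set S := (Finset.Ico K M).filter (fun n => ¬ (2 * ‖lam n‖ ≤ |x|)) with hSdef
          have hLHS : ∏ n ∈ Finset.Ico K M,
              (if 2 * ‖lam n‖ ≤ |x| then (1:ℝ) else v) = v ^ S.card := by
            rw [Finset.prod_ite, Finset.prod_const_one, one_mul, Finset.prod_const]
          have hcard : S.card ≤ 3 := by
            by_contra hcard
            push_neg at hcard
            have hSne : S.Nonempty := Finset.card_pos.1 (by omega)
            set m0 := S.min' hSne with hm0def
            have hm0 : m0 ∈ S := Finset.min'_mem _ _
            have hm0t : ¬ (2 * ‖lam m0‖ ≤ |x|) := (Finset.mem_filter.1 hm0).2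
            push_neg at hm0t
            have hsub : S ⊆ Finset.Ico m0 (m0 + 3) := by
              intro n hn
              rw [Finset.mem_Ico]
              refine ⟨Finset.min'_le _ _ hn, ?_⟩
              by_contra hge
              push_neg at hge
              obtain ⟨hnK, hnM⟩ := Finset.mem_Ico.1 (Finset.mem_filter.1 hn).1
              have hg := hgrow m0 (n - m0)
              rw [Nat.add_sub_cancel' (by omega : m0 ≤ n)] at hg
              have h8 : (8:ℝ) ≤ 2^(n - m0) := by
                calc (8:ℝ) = 2^3 := by norm_num
                  _ ≤ 2^(n-m0) := pow_le_pow_right₀ (by norm_num) (by omega)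
              have hAn := hMlt n hnM
              have h9 : (8:ℝ) * ‖lam m0‖ ≤ 2^(n-m0) * ‖lam m0‖ :=
                mul_le_mul_of_nonneg_right h8 (hApos m0).le
              linarith
            have hle := Finset.card_le_card hsub
            rw [Nat.card_Ico] at hle
            omega
          calc (c * ((4*|x|):ℝ)^(-b))^3 = v^3 := by rw [hvdef]
            _ ≤ v ^ S.card := pow_le_pow_of_le_one hv0 hv1 hcard
            _ = _ := hLHS.symm
            _ ≤ _ := hprodge
        have hnn : (0:ℝ) ≤ ∏ n ∈ Finset.Ico K M, ‖1 - (x:ℂ)/lam n‖ :=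
          Finset.prod_nonneg (fun n _ => norm_nonneg _)
        calc C1 * |x|^K * (c * (4*|x|)^(-b))^3
            ≤ (∏ n ∈ Finset.range K, ‖1 - (x:ℂ)/lam n‖)
              * (∏ n ∈ Finset.Ico K M, ‖1 - (x:ℂ)/lam n‖) := by
              apply mul_le_mul hB1 hB2 _ (Finset.prod_nonneg (fun n _ => norm_nonneg _))
              have hq : (0:ℝ) < (4*|x|:ℝ)^(-b) := Real.rpow_pos_of_pos (by linarith) _
              exact pow_nonneg (mul_nonneg hcpos.le hq.le) 3
          _ = _ := rfl
      -- combine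
      have hP : C1 * |x|^K * (c * (4*|x|)^(-b))^3 * (1/2)
          ≤ ‖∏' n, (1 - (x:ℂ)/lam n)‖ := by
        rw [← hsplit]
        have h1 : (0:ℝ) ≤ ∏ n ∈ Finset.range M, ‖1 - (x:ℂ)/lam n‖ :=
          Finset.prod_nonneg (fun n _ => norm_nonneg _)
        calc C1 * |x|^K * (c * (4*|x|)^(-b))^3 * (1/2)
            ≤ (∏ n ∈ Finset.range M, ‖1 - (x:ℂ)/lam n‖) * (1/2) :=
              mul_le_mul_of_nonneg_right hfront (by norm_num)
          _ ≤ _ := mul_le_mul_of_nonneg_left htail_ge h1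
      -- rpow algebra
      have e1 : |x| ^ (-N) * (C1 * |x|^K * (c * (4*|x|)^(-b))^3 * (1/2))
          = C * (|x| ^ (-N) * |x| ^ ((K:ℕ):ℝ) * (|x| ^ (-b))^(3:ℕ)) := by
        rw [Real.mul_rpow (by norm_num : (0:ℝ) ≤ 4) htpos.le, ← Real.rpow_natCast |x| K, hCdef]
        ring
      have e2 : |x| ^ (-N) * |x| ^ ((K:ℕ):ℝ) * (|x| ^ (-b))^(3:ℕ) = |x| ^ ((K:ℝ) - N - 3*b) := by
        rw [← Real.rpow_natCast (|x| ^ (-b)) 3, ← Real.rpow_mul htpos.le,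
          ← Real.rpow_add htpos, ← Real.rpow_add htpos]
        congr 1
        push_cast
        ring
      have e3 : C * |x| ≤ C * |x| ^ ((K:ℝ) - N - 3*b) := by
        apply mul_le_mul_of_nonneg_left _ hCpos.le
        calc |x| = |x| ^ (1:ℝ) := (Real.rpow_one _).symm
          _ ≤ |x| ^ ((K:ℝ) - N - 3*b) :=
            Real.rpow_le_rpow_of_exponent_le ht1 (by linarith)
      calc C * |x| ≤ C * |x| ^ ((K:ℝ) - N - 3*b) := e3
        _ = |x| ^ (-N) * (C1 * |x|^K * (c * (4*|x|)^(-b))^3 * (1/2)) := by rw [e1, e2]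
        _ ≤ |x| ^ (-N) * ‖∏' n, (1 - (x:ℂ)/lam n)‖ :=
            mul_le_mul_of_nonneg_left hP (Real.rpow_nonneg (abs_nonneg x) _)
    have habs : Tendsto (fun x : ℝ => |x|) (comap (fun x : ℝ => |x|) atTop) atTop :=
      tendsto_comap
    apply tendsto_atTop_mono' _ _ (Tendsto.const_mul_atTop hCpos habs)
    filter_upwards [habs.eventually (eventually_ge_atTop R0)] with x hx
    exact hmain x hx
end
end

section
/- Let σ be a finite positive measure on 𝕋 with σ({1}) = 0 and (1-ζ)^{-k} ∈ L²(σ) for all k ≥ 1, and let h ∈ L²(σ). If ∫_𝕋 \bar{ζ}^n h(ζ)/(1-\bar{ζ})^{n+1} dσ(ζ) = 0 for all n ≥ 0, then ∫_𝕋 h(ζ)/(1-\bar{ζ})^{n+1} dσ(ζ) = 0 for all n ≥ 0. -/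
open Filter Topology MeasureTheory

noncomputable section

/-- Let `σ` be a finite positive measure on the circle with `σ({1}) = 0` and
`(1-ζ)^{-k} ∈ L²(σ)` for all `k ≥ 1`, and let `h ∈ L²(σ)`.  If
`∫ conj(ζ)^n h(ζ)/(1-conj(ζ))^{n+1} dσ = 0` for all `n ≥ 0`, then
`∫ h(ζ)/(1-conj(ζ))^{n+1} dσ = 0` for all `n ≥ 0`. -/
theorem stmt13 (σ : Measure ℂ) [IsFiniteMeasure σ]
    (hsupp : ∀ᵐ ξ ∂σ, ‖ξ‖ = 1) (hpt : σ {(1 : ℂ)} = 0)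
    (hmem : ∀ k : ℕ, MemLp (fun ξ : ℂ => ((1 - ξ)⁻¹) ^ (k + 1)) 2 σ)
    (h : ℂ → ℂ) (hh : MemLp h 2 σ)
    (horth : ∀ n : ℕ,
      ∫ ξ, ((starRingEnd ℂ) ξ) ^ n * h ξ / (1 - (starRingEnd ℂ) ξ) ^ (n + 1) ∂σ = 0) :
    ∀ n : ℕ, ∫ ξ, h ξ / (1 - (starRingEnd ℂ) ξ) ^ (n + 1) ∂σ = 0 := by
  -- conjugates of the kernels are in L²
  have hmemc : ∀ m : ℕ,
      MemLp (fun ξ : ℂ => ((1 - (starRingEnd ℂ) ξ)⁻¹) ^ (m + 1)) 2 σ := by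
    intro m
    refine ⟨?_, ?_⟩
    · have : (fun ξ : ℂ => ((1 - (starRingEnd ℂ) ξ)⁻¹) ^ (m + 1)) =
          fun ξ : ℂ => (starRingEnd ℂ) (((1 - ξ)⁻¹) ^ (m + 1)) := by
        funext ξ; simp [map_pow]
      rw [this]
      exact Complex.continuous_conj.comp_aestronglyMeasurable (hmem m).1
    · rw [eLpNorm_congr_norm_ae (g := fun ξ : ℂ => ((1 - ξ)⁻¹) ^ (m + 1)) ?_]
      · exact (hmem m).2
      · filter_upwards with ξ
        have : (1 - (starRingEnd ℂ) ξ)⁻¹ ^ (m + 1) =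
            (starRingEnd ℂ) (((1 - ξ)⁻¹) ^ (m + 1)) := by simp [map_pow]
        rw [this]
        exact RCLike.norm_conj _
  -- integrability of all the integrands that appear
  have hint : ∀ m k : ℕ, Integrable
      (fun ξ : ℂ => ((starRingEnd ℂ) ξ) ^ k * h ξ / (1 - (starRingEnd ℂ) ξ) ^ (m + 1)) σ := by
    intro m k
    have hbase : Integrable
        (fun ξ : ℂ => h ξ * ((1 - (starRingEnd ℂ) ξ)⁻¹) ^ (m + 1)) σ := by
      have := (hh.smul (hmemc m) (p := 2) (q := 2) (r := 1))
      rw [memLp_one_iff_integrable] at this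
      have heq : (fun ξ : ℂ => ((1 - (starRingEnd ℂ) ξ)⁻¹) ^ (m + 1)) • h =
          fun ξ : ℂ => h ξ * ((1 - (starRingEnd ℂ) ξ)⁻¹) ^ (m + 1) := by
        funext ξ; simp [Pi.smul_apply, smul_eq_mul, mul_comm]
      rwa [heq] at this
    have hb : Integrable (fun ξ : ℂ =>
        ((starRingEnd ℂ) ξ) ^ k * (h ξ * ((1 - (starRingEnd ℂ) ξ)⁻¹) ^ (m + 1))) σ := by
      refine hbase.bdd_mul (c := 1)
        ((Complex.continuous_conj.aestronglyMeasurable).pow k) ?_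
      filter_upwards [hsupp] with ξ hξ
      simp [norm_pow, hξ]
    have heq2 : (fun ξ : ℂ => ((starRingEnd ℂ) ξ) ^ k * h ξ /
          (1 - (starRingEnd ℂ) ξ) ^ (m + 1)) =
        fun ξ : ℂ => ((starRingEnd ℂ) ξ) ^ k *
          (h ξ * ((1 - (starRingEnd ℂ) ξ)⁻¹) ^ (m + 1)) := by
      funext ξ; rw [div_eq_mul_inv, inv_pow]; ring
    rw [heq2]; exact hb
  -- a.e. every point differs from 1
  have hne1 : ∀ᵐ ξ ∂σ, ξ ≠ (1 : ℂ) := by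
    rw [ae_iff]
    convert hpt using 2
    ext ξ; simp
  -- main claim by strong induction
  have key : ∀ n k : ℕ, k ≤ n →
      ∫ ξ, ((starRingEnd ℂ) ξ) ^ k * h ξ / (1 - (starRingEnd ℂ) ξ) ^ (n + 1) ∂σ = 0 := by
    intro n
    induction n using Nat.strong_induction_on with
    | _ n IH =>
      -- downward induction on k via j = n - k
      have : ∀ j k : ℕ, k + j = n →
          ∫ ξ, ((starRingEnd ℂ) ξ) ^ k * h ξ / (1 - (starRingEnd ℂ) ξ) ^ (n + 1) ∂σ = 0 := by
        intro j
        induction j with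
        | zero => intro k hk; rw [Nat.add_zero] at hk; subst hk; exact horth k
        | succ j IHj =>
          intro k hk
          have hn : n = (k + j) + 1 := by omega
          have hlt : k + j < n := by omega
          have hae : (fun ξ : ℂ => ((starRingEnd ℂ) ξ) ^ k * h ξ /
                (1 - (starRingEnd ℂ) ξ) ^ (n + 1)) =ᵐ[σ]
              fun ξ : ℂ => ((starRingEnd ℂ) ξ) ^ (k + 1) * h ξ /
                (1 - (starRingEnd ℂ) ξ) ^ (n + 1) +
              ((starRingEnd ℂ) ξ) ^ k * h ξ / (1 - (starRingEnd ℂ) ξ) ^ ((k + j) + 1) := by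
            filter_upwards [hne1] with ξ hξ
            have hb : (1 : ℂ) - (starRingEnd ℂ) ξ ≠ 0 := by
              intro hc
              apply hξ
              have : (starRingEnd ℂ) ξ = 1 := by linear_combination -hc
              have := congrArg (starRingEnd ℂ) this
              simpa using this
            rw [hn]
            field_simp
            ring
          rw [integral_congr_ae hae, integral_add (by rw [hn]; exact hint _ _) (hint _ _),
            IHj (k + 1) (by omega), IH (k + j) hlt k (by omega), add_zero]
      intro k hk
      exact this (n - k) k (by omega)
  intro n
  have := key n 0 (Nat.zero_le n)
  simpa using this
end
end
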